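/- arXiv:2309.00517 — 5 statements merged into one kernel-verified Lean document; each statement's English description precedes it below -/
import Mathlib

section
/- Let x_0, x_1, ..., x_n be affinely independent points in ℝ^n, let σ = co({x_j}_{j=0}^n) be their convex hull, and let g : ℝ^n → ℝ^n be twice continuously differentiable on a neighborhood of σ with |∂²g^{(p)}(ξ)/∂x^{(q)}∂x^{(r)}| ≤ β for all ξ ∈ σ and all indices p, q, r ∈ {1,...,n}. For j = 0,...,n set c_j = (n/2)·‖x_j − x_0‖₂·(max_{k∈{1,...,n}} ‖x_k − x_0‖₂ + ‖x_j − x_0‖₂). Then for every x ∈ σ, writing x = Σ_{j=0}^n λ_j x_j with λ_j ≥ 0 and Σ_j λ_j = 1, one has ‖g(x) − Σ_{j=0}^n λ_j g(x_j)‖_∞ ≤ β · Σ_{j=0}^n λ_j c_j, where ‖·‖_∞ denotes the maximum absolute value of the components. -/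
open scoped BigOperators

/-- The second partial derivative `∂²φ/∂x^(q)∂x^(r)` of a scalar function on `ℝ^n`. -/
noncomputable def secondPartial {n : ℕ} (φ : EuclideanSpace ℝ (Fin n) → ℝ)
    (ξ : EuclideanSpace ℝ (Fin n)) (q r : Fin n) : ℝ :=
  fderiv ℝ (fun z => fderiv ℝ φ z (EuclideanSpace.single q (1 : ℝ))) ξ
    (EuclideanSpace.single r (1 : ℝ))

/-- The constant `c_j = (n/2)·‖x_j − x_0‖₂·(max_{k∈{1,…,n}} ‖x_k − x_0‖₂ + ‖x_j − x_0‖₂)`. -/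
noncomputable def simplexConst {n : ℕ} (x : Fin (n + 1) → EuclideanSpace ℝ (Fin n))
    (j : Fin (n + 1)) : ℝ :=
  ((n : ℝ) / 2) * ‖x j - x 0‖ * ((⨆ k : Fin n, ‖x k.succ - x 0‖) + ‖x j - x 0‖)

open Set

lemma taylor1d {h : ℝ → ℝ} {O : Set ℝ} (hO : IsOpen O) (hsub : Set.Icc (0:ℝ) 1 ⊆ O)
    (hh : ContDiffOn ℝ 2 h O) {M : ℝ}
    (hM : ∀ t ∈ Set.Icc (0:ℝ) 1, |deriv (deriv h) t| ≤ M) :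
    |h 1 - h 0 - deriv h 0| ≤ M / 2 := by
  have hud : UniqueDiffOn ℝ (Icc (0:ℝ) 1) := uniqueDiffOn_Icc one_pos
  have hdiff : ∀ t ∈ O, DifferentiableAt ℝ h t := fun t ht =>
    (hh.contDiffAt (hO.mem_nhds ht)).differentiableAt two_ne_zero
  have hderiv1 : ContDiffOn ℝ 1 (deriv h) O :=
    hh.deriv_of_isOpen hO (by norm_num)
  have hd2 : ∀ t ∈ O, DifferentiableAt ℝ (deriv h) t := fun t ht =>
    (hderiv1.contDiffAt (hO.mem_nhds ht)).differentiableAt one_ne_zero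
  have e1 : ∀ t ∈ Icc (0:ℝ) 1, iteratedDerivWithin 1 h (Icc (0:ℝ) 1) t = deriv h t := by
    intro t ht
    rw [iteratedDerivWithin_one]
    exact (hdiff t (hsub ht)).derivWithin (hud t ht)
  have hf : ContDiffOn ℝ (1:ℕ) h (Icc (0:ℝ) 1) := (hh.of_le (by norm_num)).mono hsub
  have hf' : DifferentiableOn ℝ (iteratedDerivWithin 1 h (Icc (0:ℝ) 1)) (Ioo (0:ℝ) 1) := by
    refine DifferentiableOn.congr (f := deriv h) ?_ fun t ht => e1 t (Ioo_subset_Icc_self ht)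
    exact fun t ht => (hd2 t (hsub (Ioo_subset_Icc_self ht))).differentiableWithinAt
  obtain ⟨c, hc, hEq⟩ := taylor_mean_remainder_lagrange (n := 1) (x₀ := 0) (x := 1) zero_ne_one
    (by rwa [uIcc_of_le zero_le_one]) (by rwa [uIcc_of_le zero_le_one, uIoo_of_le zero_le_one])
  rw [uIcc_of_le zero_le_one] at hEq
  rw [uIoo_of_le zero_le_one] at hc
  have htay : taylorWithinEval h 1 (Icc (0:ℝ) 1) 0 1 = h 0 + deriv h 0 := by
    rw [taylorWithinEval_succ, taylor_within_zero_eval,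
      e1 0 (by norm_num : (0:ℝ) ∈ Icc (0:ℝ) 1)]
    norm_num
  have hcI : c ∈ Icc (0:ℝ) 1 := Ioo_subset_Icc_self hc
  have h2 : iteratedDerivWithin 2 h (Icc (0:ℝ) 1) c = deriv (deriv h) c := by
    rw [show (2:ℕ) = 1 + 1 from rfl, iteratedDerivWithin_succ]
    rw [derivWithin_congr e1 (e1 c hcI)]
    exact (hd2 c (hsub hcI)).derivWithin (hud c hcI)
  rw [htay, h2] at hEq
  have : h 1 - (h 0 + deriv h 0) = deriv (deriv h) c / 2 := by
    rw [hEq]; norm_num [Nat.factorial]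
  calc |h 1 - h 0 - deriv h 0| = |deriv (deriv h) c| / 2 := by
        rw [show h 1 - h 0 - deriv h 0 = h 1 - (h 0 + deriv h 0) by ring, this, abs_div]
        norm_num
    _ ≤ M / 2 := by linarith [hM c hcI]

lemma taylorE {n : ℕ} {f : EuclideanSpace ℝ (Fin n) → ℝ} {U : Set (EuclideanSpace ℝ (Fin n))}
    (hU : IsOpen U) (hf : ContDiffOn ℝ 2 f U) {a b : EuclideanSpace ℝ (Fin n)}
    (hseg : segment ℝ a b ⊆ U) {C : ℝ}
    (hC : ∀ ξ ∈ segment ℝ a b, |fderiv ℝ (fderiv ℝ f) ξ (b - a) (b - a)| ≤ C) :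
    |f b - f a - fderiv ℝ f a (b - a)| ≤ C / 2 := by
  set v := b - a with hv
  set L : ℝ → EuclideanSpace ℝ (Fin n) := fun t => a + t • v with hLdef
  have hLc : ContDiff ℝ 2 L := contDiff_const.add (contDiff_id.smul contDiff_const)
  set O : Set ℝ := L ⁻¹' U with hOdef
  have hO : IsOpen O := hU.preimage hLc.continuous
  have hmap : ∀ t ∈ Icc (0:ℝ) 1, L t ∈ segment ℝ a b := by
    intro t ht
    rw [segment_eq_image' ℝ a b]
    exact ⟨t, ht, rfl⟩
  have hsubO : Icc (0:ℝ) 1 ⊆ O := fun t ht => hseg (hmap t ht)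
  have hL : ∀ t, HasDerivAt L v t := by
    intro t
    simpa [hLdef] using (((hasDerivAt_id t).smul_const v).const_add a)
  have hh : ContDiffOn ℝ 2 (f ∘ L) O := hf.comp hLc.contDiffOn (fun t ht => ht)
  have hd1 : ∀ t ∈ O, HasDerivAt (f ∘ L) (fderiv ℝ f (L t) v) t := by
    intro t ht
    exact ((hf.contDiffAt (hU.mem_nhds ht)).differentiableAt
      two_ne_zero).hasFDerivAt.comp_hasDerivAt t (hL t)
  have hF : ContDiffOn ℝ 1 (fderiv ℝ f) U := hf.fderiv_of_isOpen hU (by norm_num)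
  have hd2 : ∀ t ∈ O, HasDerivAt (fun s => fderiv ℝ f (L s) v)
      (fderiv ℝ (fderiv ℝ f) (L t) v v) t := by
    intro t ht
    have h1 : HasDerivAt (fun s => fderiv ℝ f (L s)) (fderiv ℝ (fderiv ℝ f) (L t) v) t :=
      ((hF.contDiffAt (hU.mem_nhds ht)).differentiableAt
        one_ne_zero).hasFDerivAt.comp_hasDerivAt t (hL t)
    have := (ContinuousLinearMap.apply ℝ ℝ v).hasFDerivAt.comp_hasDerivAt t h1
    exact this
  have hdd : ∀ t ∈ O, deriv (deriv (f ∘ L)) t = fderiv ℝ (fderiv ℝ f) (L t) v v := by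
    intro t ht
    have heq : deriv (f ∘ L) =ᶠ[nhds t] fun s => fderiv ℝ f (L s) v := by
      filter_upwards [hO.mem_nhds ht] with s hs
      exact (hd1 s hs).deriv
    rw [heq.deriv_eq]
    exact (hd2 t ht).deriv
  have key := taylor1d hO hsubO hh (M := C) ?_
  · have e0 : L 0 = a := by simp [hLdef]
    have e1 : L 1 = b := by simp [hLdef, hv]
    have ed : deriv (f ∘ L) 0 = fderiv ℝ f a v := by
      rw [(hd1 0 (hsubO (by norm_num))).deriv, e0]
    calc |f b - f a - fderiv ℝ f a (b - a)|
        = |(f ∘ L) 1 - (f ∘ L) 0 - deriv (f ∘ L) 0| := by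
          rw [ed]; simp [Function.comp, e0, e1, hv]
      _ ≤ C / 2 := key
  · intro t ht
    rw [hdd t (hsubO ht)]
    exact hC (L t) (hmap t ht)

lemma formBound {n : ℕ} {f : EuclideanSpace ℝ (Fin n) → ℝ} {U : Set (EuclideanSpace ℝ (Fin n))}
    (hU : IsOpen U) (hf : ContDiffOn ℝ 2 f U) {ξ : EuclideanSpace ℝ (Fin n)} (hξ : ξ ∈ U)
    {β : ℝ} (hb : ∀ q r : Fin n, |secondPartial f ξ q r| ≤ β) (hβ0 : 0 ≤ β)
    (v : EuclideanSpace ℝ (Fin n)) :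
    |fderiv ℝ (fderiv ℝ f) ξ v v| ≤ β * n * ‖v‖ ^ 2 := by
  have hdF : DifferentiableAt ℝ (fderiv ℝ f) ξ :=
    ((hf.fderiv_of_isOpen hU (by norm_num)).contDiffAt (hU.mem_nhds hξ)).differentiableAt one_ne_zero
  have hsp : ∀ q r : Fin n, secondPartial f ξ q r
      = fderiv ℝ (fderiv ℝ f) ξ (EuclideanSpace.single r 1) (EuclideanSpace.single q 1) := by
    intro q r
    have h : HasFDerivAt (fun z => fderiv ℝ f z (EuclideanSpace.single q (1:ℝ)))
        ((ContinuousLinearMap.apply ℝ ℝ (EuclideanSpace.single q (1:ℝ))).comp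
          (fderiv ℝ (fderiv ℝ f) ξ)) ξ :=
      (ContinuousLinearMap.apply ℝ ℝ (EuclideanSpace.single q (1:ℝ))).hasFDerivAt.comp ξ
        hdF.hasFDerivAt
    rw [secondPartial, h.fderiv]
    simp
  have hvsum : v = ∑ i, v i • EuclideanSpace.single i (1:ℝ) := by
    have h := (EuclideanSpace.basisFun (Fin n) ℝ).sum_repr v
    simp only [EuclideanSpace.basisFun_apply, EuclideanSpace.basisFun_repr] at h
    exact h.symm
  have expand : fderiv ℝ (fderiv ℝ f) ξ v v
      = ∑ r, ∑ q, v q * (v r *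
          fderiv ℝ (fderiv ℝ f) ξ (EuclideanSpace.single r 1) (EuclideanSpace.single q 1)) := by
    conv_lhs => rw [hvsum]
    simp only [map_sum, ContinuousLinearMap.sum_apply, map_smul, ContinuousLinearMap.smul_apply,
      smul_eq_mul, Finset.mul_sum]
    exact Finset.sum_comm
  set S := ∑ i, |v i| with hS
  have hstep : |fderiv ℝ (fderiv ℝ f) ξ v v| ≤ S * (S * β) := by
    rw [expand]
    calc |∑ r, ∑ q, v q * (v r *
          fderiv ℝ (fderiv ℝ f) ξ (EuclideanSpace.single r 1) (EuclideanSpace.single q 1))|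
        ≤ ∑ r, ∑ q, |v q| * (|v r| * β) := by
          refine (Finset.abs_sum_le_sum_abs _ _).trans (Finset.sum_le_sum fun r _ => ?_)
          refine (Finset.abs_sum_le_sum_abs _ _).trans (Finset.sum_le_sum fun q _ => ?_)
          rw [abs_mul, abs_mul]
          have h1 : |fderiv ℝ (fderiv ℝ f) ξ (EuclideanSpace.single r 1)
              (EuclideanSpace.single q 1)| ≤ β := by rw [← hsp q r]; exact hb q r
          exact mul_le_mul_of_nonneg_left
            (mul_le_mul_of_nonneg_left h1 (abs_nonneg _)) (abs_nonneg _)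
      _ = S * (S * β) := by
          simp_rw [← Finset.sum_mul]
          simp_rw [← Finset.mul_sum]
          rw [← Finset.sum_mul]
  have hsum_sq : S ^ 2 ≤ (n : ℝ) * ‖v‖ ^ 2 := by
    have h1 : S ^ 2 ≤ ((Finset.univ : Finset (Fin n)).card : ℝ) * ∑ i, |v i| ^ 2 :=
      sq_sum_le_card_mul_sum_sq
    have h2 : ‖v‖ ^ 2 = ∑ i, |v i| ^ 2 := by
      rw [EuclideanSpace.norm_eq, Real.sq_sqrt (by positivity)]
      simp [Real.norm_eq_abs]
    rw [h2]
    simpa using h1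
  calc |fderiv ℝ (fderiv ℝ f) ξ v v| ≤ S * (S * β) := hstep
    _ = S ^ 2 * β := by ring
    _ ≤ ((n : ℝ) * ‖v‖ ^ 2) * β := mul_le_mul_of_nonneg_right hsum_sq hβ0
    _ = β * n * ‖v‖ ^ 2 := by ring

lemma remainder_bound {n : ℕ} {f : EuclideanSpace ℝ (Fin n) → ℝ}
    {U : Set (EuclideanSpace ℝ (Fin n))} (hU : IsOpen U) (hf : ContDiffOn ℝ 2 f U)
    {S : Set (EuclideanSpace ℝ (Fin n))} (hSc : Convex ℝ S) (hSU : S ⊆ U)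
    {β : ℝ} (hβ0 : 0 ≤ β) (hb : ∀ ξ ∈ S, ∀ q r : Fin n, |secondPartial f ξ q r| ≤ β)
    {a y : EuclideanSpace ℝ (Fin n)} (ha : a ∈ S) (hy : y ∈ S) :
    |f y - f a - fderiv ℝ f a (y - a)| ≤ β * n * ‖y - a‖ ^ 2 / 2 := by
  have hseg : segment ℝ a y ⊆ S := hSc.segment_subset ha hy
  have h := taylorE hU hf (hseg.trans hSU) (C := β * n * ‖y - a‖ ^ 2) ?_
  · linarith
  · intro ξ hξ
    exact formBound hU hf (hSU (hseg hξ)) (fun q r => hb ξ (hseg hξ) q r) hβ0 (y - a)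

/-- CPA interpolation error bound on a simplex (componentwise, i.e. in the
`∞`-norm on the codomain). -/
theorem cpa_interpolation_error (n : ℕ) (x : Fin (n + 1) → EuclideanSpace ℝ (Fin n))
    (hx : LinearIndependent ℝ (fun k : Fin n => x k.succ - x 0))
    (g : EuclideanSpace ℝ (Fin n) → (Fin n → ℝ)) (β : ℝ)
    (U : Set (EuclideanSpace ℝ (Fin n))) (hU : IsOpen U)
    (hσU : convexHull ℝ (Set.range x) ⊆ U)
    (hg : ContDiffOn ℝ 2 g U)
    (hβ : ∀ ξ ∈ convexHull ℝ (Set.range x), ∀ p q r : Fin n,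
      |secondPartial (fun z => g z p) ξ q r| ≤ β)
    (lam : Fin (n + 1) → ℝ) (hlam0 : ∀ j, 0 ≤ lam j) (hlam1 : ∑ j, lam j = 1) :
    ∀ p : Fin n,
      |g (∑ j, lam j • x j) p - ∑ j, lam j * g (x j) p| ≤
        β * ∑ j, lam j * simplexConst x j := by
  intro p
  have hn : 0 < n := p.pos
  have hconv : Convex ℝ (convexHull ℝ (Set.range x)) := convex_convexHull ℝ _
  have hmem : ∀ j, x j ∈ convexHull ℝ (Set.range x) := fun j =>
    subset_convexHull ℝ _ ⟨j, rfl⟩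
  set X := ∑ j, lam j • x j with hXdef
  have hX : X ∈ convexHull ℝ (Set.range x) :=
    hconv.sum_mem (fun j _ => hlam0 j) hlam1 (fun j _ => hmem j)
  have hφC : ContDiffOn ℝ 2 (fun z => g z p) U :=
    (ContinuousLinearMap.proj p : (Fin n → ℝ) →L[ℝ] ℝ).contDiff.comp_contDiffOn hg
  have hβ0 : 0 ≤ β := (abs_nonneg _).trans (hβ (x 0) (hmem 0) p p p)
  set A := fderiv ℝ (fun z => g z p) (x 0) with hA
  have hR : ∀ y ∈ convexHull ℝ (Set.range x),
      |g y p - g (x 0) p - A (y - x 0)| ≤ β * n * ‖y - x 0‖ ^ 2 / 2 := fun y hy =>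
    remainder_bound hU hφC hconv hσU hβ0 (fun ξ hξ q r => hβ ξ hξ p q r) (hmem 0) hy
  have hXsub : X - x 0 = ∑ j, lam j • (x j - x 0) := by
    calc X - x 0 = X - (∑ j, lam j) • x 0 := by rw [hlam1, one_smul]
      _ = ∑ j, (lam j • x j - lam j • x 0) := by
          rw [Finset.sum_smul, ← Finset.sum_sub_distrib]
      _ = ∑ j, lam j • (x j - x 0) := by simp [smul_sub]
  have hAX : A (X - x 0) = ∑ j, lam j * A (x j - x 0) := by
    rw [hXsub, map_sum]
    simp [map_smul, smul_eq_mul]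
  have e1 : ∑ j, lam j * (g (x j) p - g (x 0) p - A (x j - x 0))
      = (∑ j, lam j * g (x j) p) - g (x 0) p - A (X - x 0) := by
    simp only [mul_sub]
    rw [Finset.sum_sub_distrib, Finset.sum_sub_distrib, ← Finset.sum_mul, hlam1, one_mul, hAX]
  have hid : g X p - ∑ j, lam j * g (x j) p
      = (g X p - g (x 0) p - A (X - x 0)) - ∑ j, lam j * (g (x j) p - g (x 0) p - A (x j - x 0)) := by
    rw [e1]; ring
  -- max norm of vertices
  have hbdd : BddAbove (Set.range fun k : Fin n => ‖x k.succ - x 0‖) :=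
    Set.Finite.bddAbove (Set.finite_range _)
  set Cmax := ⨆ k : Fin n, ‖x k.succ - x 0‖ with hCmaxdef
  have hCm : ∀ j, ‖x j - x 0‖ ≤ Cmax := by
    intro j
    refine Fin.cases ?_ (fun k => le_ciSup hbdd k) j
    · simp only [sub_self, norm_zero]
      exact (norm_nonneg _).trans (le_ciSup hbdd ⟨0, hn⟩)
  have hC0 : 0 ≤ Cmax := (norm_nonneg _).trans (hCm 0)
  have hnormX : ‖X - x 0‖ ≤ ∑ j, lam j * ‖x j - x 0‖ := by
    rw [hXsub]
    refine (norm_sum_le _ _).trans_eq (Finset.sum_congr rfl fun j _ => ?_)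
    rw [norm_smul, Real.norm_eq_abs, abs_of_nonneg (hlam0 j)]
  have hsum_le : ∑ j, lam j * ‖x j - x 0‖ ≤ Cmax := by
    calc ∑ j, lam j * ‖x j - x 0‖ ≤ ∑ j, lam j * Cmax :=
          Finset.sum_le_sum fun j _ => mul_le_mul_of_nonneg_left (hCm j) (hlam0 j)
      _ = Cmax := by rw [← Finset.sum_mul, hlam1, one_mul]
  have hsumd0 : 0 ≤ ∑ j, lam j * ‖x j - x 0‖ :=
    Finset.sum_nonneg fun j _ => mul_nonneg (hlam0 j) (norm_nonneg _)
  have hXmax : ‖X - x 0‖ ≤ Cmax := hnormX.trans hsum_le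
  have hRX : |g X p - g (x 0) p - A (X - x 0)|
      ≤ β * n * (Cmax * ∑ j, lam j * ‖x j - x 0‖) / 2 := by
    refine (hR X hX).trans ?_
    have h1 : ‖X - x 0‖ ^ 2 ≤ Cmax * ∑ j, lam j * ‖x j - x 0‖ := by
      rw [sq]
      exact mul_le_mul hXmax hnormX (norm_nonneg _) hC0
    have h2 : (0:ℝ) ≤ β * n := by positivity
    nlinarith
  have hRsum : ∀ j, lam j * |g (x j) p - g (x 0) p - A (x j - x 0)|
      ≤ lam j * (β * n * ‖x j - x 0‖ ^ 2 / 2) := fun j =>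
    mul_le_mul_of_nonneg_left (hR (x j) (hmem j)) (hlam0 j)
  have hfinal : β * ∑ j, lam j * simplexConst x j
      = β * n * (Cmax * ∑ j, lam j * ‖x j - x 0‖) / 2
        + ∑ j, lam j * (β * n * ‖x j - x 0‖ ^ 2 / 2) := by
    simp only [simplexConst, ← hCmaxdef]
    rw [Finset.mul_sum, Finset.mul_sum, Finset.mul_sum, Finset.sum_div, ← Finset.sum_add_distrib]
    refine Finset.sum_congr rfl fun j _ => by ring
  calc |g X p - ∑ j, lam j * g (x j) p|
      = |(g X p - g (x 0) p - A (X - x 0))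
          - ∑ j, lam j * (g (x j) p - g (x 0) p - A (x j - x 0))| := by rw [hid]
    _ ≤ |g X p - g (x 0) p - A (X - x 0)|
          + |∑ j, lam j * (g (x j) p - g (x 0) p - A (x j - x 0))| := abs_sub _ _
    _ ≤ |g X p - g (x 0) p - A (X - x 0)|
          + ∑ j, lam j * |g (x j) p - g (x 0) p - A (x j - x 0)| := by
        refine add_le_add le_rfl ((Finset.abs_sum_le_sum_abs _ _).trans
          (Finset.sum_le_sum fun j _ => ?_))
        rw [abs_mul, abs_of_nonneg (hlam0 j)]
    _ ≤ β * n * (Cmax * ∑ j, lam j * ‖x j - x 0‖) / 2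
          + ∑ j, lam j * (β * n * ‖x j - x 0‖ ^ 2 / 2) :=
        add_le_add hRX (Finset.sum_le_sum fun j _ => hRsum j)
    _ = β * ∑ j, lam j * simplexConst x j := hfinal.symm
end

section
/- Let x_0, ..., x_n be affinely independent points in ℝ^n with convex hull σ, let f : ℝ^n → ℝ^n be twice continuously differentiable on a neighborhood of σ with all second partial derivatives of all components bounded in absolute value by β on σ, and let c_j = (n/2)·‖x_j − x_0‖₂·(max_k ‖x_k − x_0‖₂ + ‖x_j − x_0‖₂). Let v ∈ ℝ^n and let l ∈ ℝ^n be a vector with |v^{(k)}| ≤ l^{(k)} for each component k. Then for every x = Σ_j λ_j x_j ∈ σ (λ_j ≥ 0, Σ_j λ_j = 1): v · f(x) ≤ Σ_{j=0}^n λ_j (v · f(x_j)) + β · (1_n · l) · Σ_{j=0}^n λ_j c_j, where 1_n · l denotes the sum of the components of l. -/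
open scoped BigOperators

lemma euclid_decomp {n : ℕ} (d : EuclideanSpace ℝ (Fin n)) :
    d = ∑ i, (d i) • EuclideanSpace.single i (1:ℝ) := by
  ext j
  have : (∑ i, (d i) • EuclideanSpace.single i (1:ℝ)) j
      = ∑ i, ((d i) • EuclideanSpace.single i (1:ℝ)) j := by rw [WithLp.ofLp_sum, Finset.sum_apply]
  rw [this]
  simp [EuclideanSpace.single_apply]

lemma bilin_bound {n : ℕ}
    (L : EuclideanSpace ℝ (Fin n) →L[ℝ] EuclideanSpace ℝ (Fin n) →L[ℝ] ℝ)
    (M : ℝ) (d : EuclideanSpace ℝ (Fin n))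
    (h : ∀ q r : Fin n, |L (EuclideanSpace.single r 1) (EuclideanSpace.single q 1)| ≤ M) :
    |L d d| ≤ M * (∑ i, |d i|)^2 := by
  have hd := euclid_decomp d
  have key : L d d = ∑ r, ∑ q, d r * d q * L (EuclideanSpace.single r 1) (EuclideanSpace.single q 1) := by
    conv_lhs => rw [hd]
    simp only [map_sum, map_smul, ContinuousLinearMap.sum_apply, ContinuousLinearMap.smul_apply,
      smul_eq_mul]
    simp only [Finset.mul_sum]
    rw [Finset.sum_comm]
    exact Finset.sum_congr rfl fun r _ => Finset.sum_congr rfl fun q _ => by ring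
  rw [key]
  calc |∑ r, ∑ q, d r * d q * L (EuclideanSpace.single r 1) (EuclideanSpace.single q 1)|
      ≤ ∑ r, ∑ q, |d r * d q * L (EuclideanSpace.single r 1) (EuclideanSpace.single q 1)| := by
        refine (Finset.abs_sum_le_sum_abs _ _).trans ?_
        exact Finset.sum_le_sum fun r _ => Finset.abs_sum_le_sum_abs _ _
    _ ≤ ∑ r, ∑ q, |d r| * |d q| * M := by
        refine Finset.sum_le_sum fun r _ => Finset.sum_le_sum fun q _ => ?_
        rw [abs_mul, abs_mul]
        exact mul_le_mul_of_nonneg_left (h q r) (by positivity)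
    _ = M * (∑ i, |d i|)^2 := by
        rw [sq, Finset.sum_mul_sum, Finset.mul_sum]
        refine Finset.sum_congr rfl fun r _ => ?_
        rw [Finset.mul_sum]
        exact Finset.sum_congr rfl fun q _ => by ring

lemma taylor_bound {n : ℕ} {U : Set (EuclideanSpace ℝ (Fin n))} (hU : IsOpen U)
    (g : EuclideanSpace ℝ (Fin n) → ℝ) (hg : ContDiffOn ℝ 2 g U)
    (a b : EuclideanSpace ℝ (Fin n)) (hseg : segment ℝ a b ⊆ U) (B : ℝ)
    (hB : ∀ z ∈ segment ℝ a b, |fderiv ℝ (fderiv ℝ g) z (b - a) (b - a)| ≤ B) :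
    |g b - g a - fderiv ℝ g a (b - a)| ≤ B / 2 := by
  set d := b - a with hd
  set γ : ℝ → EuclideanSpace ℝ (Fin n) := fun t => a + t • d with hγ
  have hγmem : ∀ t ∈ Set.Icc (0:ℝ) 1, γ t ∈ segment ℝ a b := by
    intro t ht
    rw [segment_eq_image' ℝ a b]
    exact ⟨t, ht, rfl⟩
  have hγU : ∀ t ∈ Set.Icc (0:ℝ) 1, γ t ∈ U := fun t ht => hseg (hγmem t ht)
  have hgdiff : ∀ z ∈ U, DifferentiableAt ℝ g z := fun z hz =>
    (hg.contDiffAt (hU.mem_nhds hz)).differentiableAt two_ne_zero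
  have hg1 : ContDiffOn ℝ 1 (fderiv ℝ g) U := hg.fderiv_of_isOpen hU (by norm_num)
  have hg1diff : ∀ z ∈ U, DifferentiableAt ℝ (fderiv ℝ g) z := fun z hz =>
    (hg1.contDiffAt (hU.mem_nhds hz)).differentiableAt one_ne_zero
  have hγd : ∀ t : ℝ, HasDerivAt γ d t := by
    intro t
    simpa only [id, one_smul] using ((hasDerivAt_id t).smul_const d).const_add a
  set η : ℝ → ℝ := fun t => fderiv ℝ g (γ t) d with hη
  have hψ : ∀ t ∈ Set.Icc (0:ℝ) 1, HasDerivAt (fun s => g (γ s)) (η t) t := by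
    intro t ht
    exact (hgdiff _ (hγU t ht)).hasFDerivAt.comp_hasDerivAt t (hγd t)
  have hη' : ∀ t ∈ Set.Icc (0:ℝ) 1,
      HasDerivAt η (fderiv ℝ (fderiv ℝ g) (γ t) d d) t := by
    intro t ht
    have h1 : HasFDerivAt (fderiv ℝ g) (fderiv ℝ (fderiv ℝ g) (γ t)) (γ t) :=
      (hg1diff _ (hγU t ht)).hasFDerivAt
    have h2 : HasFDerivAt (fun z => fderiv ℝ g z d)
        ((ContinuousLinearMap.apply ℝ ℝ d).comp (fderiv ℝ (fderiv ℝ g) (γ t))) (γ t) :=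
      (ContinuousLinearMap.apply ℝ ℝ d).hasFDerivAt.comp _ h1
    exact h2.comp_hasDerivAt t (hγd t)
  have hηcont : ContinuousOn η (Set.Icc (0:ℝ) 1) := by
    have hc : ContinuousOn (fderiv ℝ g) U := hg.continuousOn_fderiv_of_isOpen hU one_le_two
    have hγc : ContinuousOn γ (Set.Icc (0:ℝ) 1) :=
      (continuous_const.add (continuous_id.smul continuous_const)).continuousOn
    exact (ContinuousLinearMap.apply ℝ ℝ d).continuous.comp_continuousOn (hc.comp hγc hγU)
  have hstep : ∀ t ∈ Set.Icc (0:ℝ) 1, |η t - η 0| ≤ B * t := by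
    intro t ht
    have h := Convex.norm_image_sub_le_of_norm_hasDerivWithin_le
      (f := η) (f' := fun s => fderiv ℝ (fderiv ℝ g) (γ s) d d) (C := B)
      (fun s hs => (hη' s hs).hasDerivWithinAt)
      (fun s hs => by simpa using hB (γ s) (hγmem s hs))
      (convex_Icc (0:ℝ) 1) (Set.left_mem_Icc.2 zero_le_one) ht
    have h0 : ‖t - 0‖ = t := by rw [sub_zero, Real.norm_eq_abs, abs_of_nonneg ht.1]
    rw [h0] at h
    simpa using h
  have hint : IntervalIntegrable η MeasureTheory.volume 0 1 := by
    apply ContinuousOn.intervalIntegrable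
    rwa [Set.uIcc_of_le zero_le_one]
  have heq : ∫ t in (0:ℝ)..1, η t = g (γ 1) - g (γ 0) :=
    intervalIntegral.integral_eq_sub_of_hasDerivAt
      (fun t ht => hψ t (by rwa [Set.uIcc_of_le zero_le_one] at ht)) hint
  have hγ0 : γ 0 = a := by simp [hγ]
  have hγ1 : γ 1 = b := by simp [hγ, hd]
  have hη0 : η 0 = fderiv ℝ g a d := by rw [hη]; simp only; rw [hγ0]
  have key : g b - g a - fderiv ℝ g a d = ∫ t in (0:ℝ)..1, (η t - η 0) := by
    rw [intervalIntegral.integral_sub hint intervalIntegrable_const, heq, hγ0, hγ1, hη0]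
    simp
  rw [key]
  have h1 : |∫ t in (0:ℝ)..1, (η t - η 0)| ≤ ∫ t in (0:ℝ)..1, |η t - η 0| :=
    by simpa [Real.norm_eq_abs] using
      intervalIntegral.norm_integral_le_integral_norm (μ := MeasureTheory.volume)
        (f := fun t => η t - η 0) zero_le_one
  have h2 : ∫ t in (0:ℝ)..1, |η t - η 0| ≤ ∫ t in (0:ℝ)..1, B * t := by
    apply intervalIntegral.integral_mono_on zero_le_one
    · exact (hint.sub intervalIntegrable_const).abs
    · exact (continuous_const.mul continuous_id).intervalIntegrable _ _
    · exact hstep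
  have h3 : ∫ t in (0:ℝ)..1, B * t = B / 2 := by
    rw [intervalIntegral.integral_const_mul, integral_id]; ring
  calc |∫ t in (0:ℝ)..1, (η t - η 0)| ≤ ∫ t in (0:ℝ)..1, |η t - η 0| := h1
    _ ≤ ∫ t in (0:ℝ)..1, B * t := h2
    _ = B / 2 := h3

/-- bound on `v · f(x)` over a simplex:
`v · f(x) ≤ Σ_j λ_j (v · f(x_j)) + β (1_n·l) Σ_j λ_j c_j`. -/
theorem dot_vectorField_bound (n : ℕ) (x : Fin (n + 1) → EuclideanSpace ℝ (Fin n))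
    (hx : LinearIndependent ℝ (fun k : Fin n => x k.succ - x 0))
    (f : EuclideanSpace ℝ (Fin n) → (Fin n → ℝ)) (β : ℝ)
    (U : Set (EuclideanSpace ℝ (Fin n))) (hU : IsOpen U)
    (hσU : convexHull ℝ (Set.range x) ⊆ U)
    (hf : ContDiffOn ℝ 2 f U)
    (hβ : ∀ ξ ∈ convexHull ℝ (Set.range x), ∀ p q r : Fin n,
      |secondPartial (fun z => f z p) ξ q r| ≤ β)
    (v l : Fin n → ℝ) (hvl : ∀ k, |v k| ≤ l k)
    (lam : Fin (n + 1) → ℝ) (hlam0 : ∀ j, 0 ≤ lam j) (hlam1 : ∑ j, lam j = 1) :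
    (∑ k, v k * f (∑ j, lam j • x j) k) ≤
      (∑ j, lam j * (∑ k, v k * f (x j) k)) +
        β * (∑ k, l k) * ∑ j, lam j * simplexConst x j := by
  classical
  rcases Nat.eq_zero_or_pos n with hn | hn
  · subst hn
    simp
  set σ : Set (EuclideanSpace ℝ (Fin n)) := convexHull ℝ (Set.range x) with hσdef
  set g : EuclideanSpace ℝ (Fin n) → ℝ := fun z => ∑ k, v k * f z k with hgdef
  set M : ℝ := β * ∑ k, l k with hM
  set pt : EuclideanSpace ℝ (Fin n) := ∑ j, lam j • x j with hptdef
  set μ : ℝ := ⨆ k : Fin n, ‖x k.succ - x 0‖ with hμdef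
  have hx0σ : x 0 ∈ σ := subset_convexHull ℝ _ ⟨0, rfl⟩
  have hxσ : ∀ j, x j ∈ σ := fun j => subset_convexHull ℝ _ ⟨j, rfl⟩
  have hconv : Convex ℝ σ := convex_convexHull ℝ _
  have hptσ : pt ∈ σ := by
    have h := Finset.centerMass_mem_convexHull (s := Set.range x) Finset.univ
      (fun j _ => hlam0 j) (by rw [hlam1]; norm_num) (fun j _ => Set.mem_range_self j)
    rwa [Finset.centerMass_eq_of_sum_1 _ _ hlam1] at h
  have hβ0 : 0 ≤ β := le_trans (abs_nonneg _) (hβ _ hx0σ ⟨0, hn⟩ ⟨0, hn⟩ ⟨0, hn⟩)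
  have hl0 : ∀ k, 0 ≤ l k := fun k => le_trans (abs_nonneg _) (hvl k)
  have hM0 : 0 ≤ M := mul_nonneg hβ0 (Finset.sum_nonneg fun k _ => hl0 k)
  -- smoothness
  have hfk : ∀ k : Fin n, ContDiffOn ℝ 2 (fun z => f z k) U := fun k =>
    (ContinuousLinearMap.proj k : (Fin n → ℝ) →L[ℝ] ℝ).contDiff.comp_contDiffOn hf
  have hg : ContDiffOn ℝ 2 g U :=
    ContDiffOn.sum fun k _ => contDiffOn_const.mul (hfk k)
  have hfkdiff : ∀ k : Fin n, ∀ z ∈ U, DifferentiableAt ℝ (fun w => f w k) z := fun k z hz =>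
    ((hfk k).contDiffAt (hU.mem_nhds hz)).differentiableAt two_ne_zero
  have hfk1 : ∀ k : Fin n, ContDiffOn ℝ 1 (fderiv ℝ (fun w => f w k)) U := fun k =>
    (hfk k).fderiv_of_isOpen hU (by norm_num)
  have hg1 : ContDiffOn ℝ 1 (fderiv ℝ g) U := hg.fderiv_of_isOpen hU (by norm_num)
  -- Hessian entry bound
  have hHess : ∀ ξ ∈ σ, ∀ q r : Fin n,
      |fderiv ℝ (fderiv ℝ g) ξ (EuclideanSpace.single r 1) (EuclideanSpace.single q 1)| ≤ M := by
    intro ξ hξ q r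
    have hξU : ξ ∈ U := hσU hξ
    set u : EuclideanSpace ℝ (Fin n) := EuclideanSpace.single q (1:ℝ) with hu
    set w : EuclideanSpace ℝ (Fin n) := EuclideanSpace.single r (1:ℝ) with hw
    have h2 : HasFDerivAt (fun z => fderiv ℝ g z u)
        ((ContinuousLinearMap.apply ℝ ℝ u).comp (fderiv ℝ (fderiv ℝ g) ξ)) ξ :=
      (ContinuousLinearMap.apply ℝ ℝ u).hasFDerivAt.comp _
        ((hg1.contDiffAt (hU.mem_nhds hξU)).differentiableAt one_ne_zero).hasFDerivAt
    have step1 : fderiv ℝ (fderiv ℝ g) ξ w u = fderiv ℝ (fun z => fderiv ℝ g z u) ξ w := by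
      rw [h2.fderiv]; rfl
    have feq : ∀ z ∈ U, fderiv ℝ g z u = ∑ k, v k * fderiv ℝ (fun w' => f w' k) z u := by
      intro z hz
      have hfd : fderiv ℝ g z = ∑ k, v k • fderiv ℝ (fun w' => f w' k) z := by
        rw [hgdef]
        rw [fderiv_fun_sum (fun k _ => (hfkdiff k z hz).const_mul (v k))]
        exact Finset.sum_congr rfl fun k _ => fderiv_const_mul (hfkdiff k z hz) (v k)
      rw [hfd]
      simp [ContinuousLinearMap.sum_apply]
    have ev : (fun z => fderiv ℝ g z u) =ᶠ[nhds ξ]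
        (fun z => ∑ k, v k * fderiv ℝ (fun w' => f w' k) z u) := by
      filter_upwards [hU.mem_nhds hξU] with z hz using feq z hz
    have hAdiff : ∀ k : Fin n, DifferentiableAt ℝ (fun z => fderiv ℝ (fun w' => f w' k) z u) ξ := by
      intro k
      have hk : DifferentiableAt ℝ (fderiv ℝ (fun w' => f w' k)) ξ :=
        ((hfk1 k).contDiffAt (hU.mem_nhds hξU)).differentiableAt one_ne_zero
      exact ((ContinuousLinearMap.apply ℝ ℝ u).hasFDerivAt.comp _ hk.hasFDerivAt).differentiableAt
    have step2 : fderiv ℝ (fun z => fderiv ℝ g z u) ξ w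
        = ∑ k, v k * secondPartial (fun z => f z k) ξ q r := by
      rw [ev.fderiv_eq]
      rw [fderiv_fun_sum (fun k _ => (hAdiff k).const_mul (v k))]
      have hc : ∀ k ∈ Finset.univ, fderiv ℝ (fun z => v k * fderiv ℝ (fun w' => f w' k) z u) ξ
          = v k • fderiv ℝ (fun z => fderiv ℝ (fun w' => f w' k) z u) ξ :=
        fun k _ => fderiv_const_mul (hAdiff k) (v k)
      rw [Finset.sum_congr rfl hc, ContinuousLinearMap.sum_apply]
      exact Finset.sum_congr rfl fun k _ => by
        rw [ContinuousLinearMap.smul_apply, smul_eq_mul]; rfl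
    rw [step1, step2]
    calc |∑ k, v k * secondPartial (fun z => f z k) ξ q r|
        ≤ ∑ k, |v k| * |secondPartial (fun z => f z k) ξ q r| := by
          refine (Finset.abs_sum_le_sum_abs _ _).trans (le_of_eq ?_)
          exact Finset.sum_congr rfl fun k _ => abs_mul _ _
      _ ≤ ∑ k, l k * β := Finset.sum_le_sum fun k _ =>
          mul_le_mul (hvl k) (hβ ξ hξ k q r) (abs_nonneg _) (hl0 k)
      _ = M := by rw [← Finset.sum_mul, mul_comm]
  -- Cauchy–Schwarz ℓ¹–ℓ²
  have habs : ∀ dv : EuclideanSpace ℝ (Fin n), (∑ i, |dv i|)^2 ≤ (n : ℝ) * ‖dv‖^2 := by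
    intro dv
    have h1 : (∑ i, |dv i|)^2 ≤ (Finset.univ.card (α := Fin n) : ℝ) * ∑ i, |dv i|^2 :=
      sq_sum_le_card_mul_sum_sq
    have h2 : ‖dv‖^2 = ∑ i, |dv i|^2 := by
      rw [EuclideanSpace.norm_eq, Real.sq_sqrt (by positivity)]
      exact Finset.sum_congr rfl fun i _ => by rw [Real.norm_eq_abs]
    rw [h2]
    simpa [Finset.card_univ] using h1
  -- remainder bound
  have hR : ∀ y ∈ σ, |g y - g (x 0) - fderiv ℝ g (x 0) (y - x 0)|
      ≤ M * (n : ℝ) * ‖y - x 0‖^2 / 2 := by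
    intro y hy
    have hsegσ : segment ℝ (x 0) y ⊆ σ := hconv.segment_subset hx0σ hy
    have hB : ∀ z ∈ segment ℝ (x 0) y,
        |fderiv ℝ (fderiv ℝ g) z (y - x 0) (y - x 0)| ≤ M * (∑ i, |(y - x 0) i|)^2 :=
      fun z hz => bilin_bound _ M _ (fun q' r' => hHess z (hsegσ hz) q' r')
    have ht := taylor_bound hU g hg (x 0) y (hsegσ.trans hσU) _ hB
    refine ht.trans ?_
    have hcs : M * (∑ i, |(y - x 0) i|)^2 ≤ M * ((n:ℝ) * ‖y - x 0‖^2) :=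
      mul_le_mul_of_nonneg_left (habs _) hM0
    linarith
  -- linear algebra identities
  have hsum : ∑ j, lam j • (x j - x 0) = pt - x 0 := by
    rw [hptdef]
    simp only [smul_sub]
    rw [Finset.sum_sub_distrib, ← Finset.sum_smul, hlam1, one_smul]
  have hlin : fderiv ℝ g (x 0) (pt - x 0) = ∑ j, lam j * fderiv ℝ g (x 0) (x j - x 0) := by
    rw [← hsum, map_sum]
    exact Finset.sum_congr rfl fun j _ => by rw [map_smul]; rfl
  have hkey : g pt - ∑ j, lam j * g (x j)
      = (g pt - g (x 0) - fderiv ℝ g (x 0) (pt - x 0))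
        - ∑ j, lam j * (g (x j) - g (x 0) - fderiv ℝ g (x 0) (x j - x 0)) := by
    have hexp : ∑ j, lam j * (g (x j) - g (x 0) - fderiv ℝ g (x 0) (x j - x 0))
        = (∑ j, lam j * g (x j)) - g (x 0) - fderiv ℝ g (x 0) (pt - x 0) := by
      rw [hlin]
      simp only [mul_sub]
      rw [Finset.sum_sub_distrib, Finset.sum_sub_distrib, ← Finset.sum_mul, hlam1, one_mul]
    rw [hexp]; ring
  -- norm bounds
  have hbdd : BddAbove (Set.range fun k : Fin n => ‖x k.succ - x 0‖) :=
    (Set.finite_range _).bddAbove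
  have hAμ : ∀ j, ‖x j - x 0‖ ≤ μ := by
    intro j
    rcases eq_or_ne j 0 with rfl | hj
    · simp only [sub_self, norm_zero]
      exact le_trans (norm_nonneg (x (⟨0, hn⟩ : Fin n).succ - x 0)) (le_ciSup hbdd ⟨0, hn⟩)
    · have : j = (j.pred hj).succ := (Fin.succ_pred j hj).symm
      rw [this]
      exact le_ciSup hbdd (j.pred hj)
  have hμ0 : 0 ≤ μ := le_trans (norm_nonneg _) (hAμ 0)
  have hptnorm : ‖pt - x 0‖ ≤ ∑ j, lam j * ‖x j - x 0‖ := by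
    calc ‖pt - x 0‖ = ‖∑ j, lam j • (x j - x 0)‖ := by rw [hsum]
      _ ≤ ∑ j, ‖lam j • (x j - x 0)‖ := norm_sum_le _ _
      _ = ∑ j, lam j * ‖x j - x 0‖ := Finset.sum_congr rfl fun j _ => by
          rw [norm_smul, Real.norm_eq_abs, abs_of_nonneg (hlam0 j)]
  have hptμ : ‖pt - x 0‖ ≤ μ := by
    refine hptnorm.trans ?_
    calc ∑ j, lam j * ‖x j - x 0‖ ≤ ∑ j, lam j * μ :=
          Finset.sum_le_sum fun j _ => mul_le_mul_of_nonneg_left (hAμ j) (hlam0 j)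
      _ = μ := by rw [← Finset.sum_mul, hlam1, one_mul]
  have hptsq : ‖pt - x 0‖^2 ≤ ∑ j, lam j * (‖x j - x 0‖ * μ) := by
    calc ‖pt - x 0‖^2 = ‖pt - x 0‖ * ‖pt - x 0‖ := sq ‖pt - x 0‖
      _ ≤ (∑ j, lam j * ‖x j - x 0‖) * μ :=
          mul_le_mul hptnorm hptμ (norm_nonneg _)
            (Finset.sum_nonneg fun j _ => mul_nonneg (hlam0 j) (norm_nonneg _))
      _ = ∑ j, lam j * (‖x j - x 0‖ * μ) := by
          rw [Finset.sum_mul]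
          exact Finset.sum_congr rfl fun j _ => by ring
  -- assemble
  have hRpt := hR pt hptσ
  have hRj : ∀ j, |g (x j) - g (x 0) - fderiv ℝ g (x 0) (x j - x 0)|
      ≤ M * (n:ℝ) * ‖x j - x 0‖^2 / 2 := fun j => hR _ (hxσ j)
  have e2 : |∑ j, lam j * (g (x j) - g (x 0) - fderiv ℝ g (x 0) (x j - x 0))|
      ≤ ∑ j, lam j * (M * (n:ℝ) * ‖x j - x 0‖^2 / 2) := by
    refine (Finset.abs_sum_le_sum_abs _ _).trans (Finset.sum_le_sum fun j _ => ?_)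
    rw [abs_mul, abs_of_nonneg (hlam0 j)]
    exact mul_le_mul_of_nonneg_left (hRj j) (hlam0 j)
  have e1 := le_of_abs_le hRpt
  have e2' := (abs_le.mp e2).1
  have hmain : g pt - ∑ j, lam j * g (x j)
      ≤ M * (n:ℝ) * ‖pt - x 0‖^2 / 2 + ∑ j, lam j * (M * (n:ℝ) * ‖x j - x 0‖^2 / 2) := by
    rw [hkey]; linarith
  have hfinal : g pt ≤ (∑ j, lam j * g (x j)) + M * ∑ j, lam j * simplexConst x j := by
    have hb1 : M * (n:ℝ) * ‖pt - x 0‖^2 / 2 ≤ M * (n:ℝ) / 2 * ∑ j, lam j * (‖x j - x 0‖ * μ) := by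
      have := mul_le_mul_of_nonneg_left hptsq
        (by positivity : (0:ℝ) ≤ M * (n:ℝ) / 2)
      linarith
    have hc : M * (n:ℝ) / 2 * ∑ j, lam j * (‖x j - x 0‖ * μ)
        + ∑ j, lam j * (M * (n:ℝ) * ‖x j - x 0‖^2 / 2)
        = M * ∑ j, lam j * simplexConst x j := by
      rw [Finset.mul_sum, Finset.mul_sum, ← Finset.sum_add_distrib]
      refine Finset.sum_congr rfl fun j _ => ?_
      rw [simplexConst, ← hμdef]
      ring
    linarith [hmain, hb1]
  calc (∑ k, v k * f pt k) = g pt := rfl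
    _ ≤ (∑ j, lam j * g (x j)) + M * ∑ j, lam j * simplexConst x j := hfinal
    _ = (∑ j, lam j * (∑ k, v k * f (x j) k)) + β * (∑ k, l k) * ∑ j, lam j * simplexConst x j := rfl
end

section
/- Let x_0, ..., x_n be affinely independent points in ℝ^n with convex hull σ, and let c_j = (n/2)·‖x_j − x_0‖₂·(max_k ‖x_k − x_0‖₂ + ‖x_j − x_0‖₂). Let f : ℝ^n → ℝ^n, h : ℝ^n → ℝ^q, and G : ℝ^n → ℝ^{n×m} be given, and define ḡ(x) = ‖G(x)G(x)ᵀ‖_∞ (induced ∞-norm) and h̄(x) = ‖h(x)‖₂². Assume f, h̄, and ḡ are twice continuously differentiable on a neighborhood of σ, with: all second partial derivatives of all components of f bounded in absolute value by β on σ; all second partial derivatives of h̄ bounded in absolute value by β̃ on σ; and all second partial derivatives of ḡ bounded in absolute value by β̄ on σ. Let w ∈ ℝ^n, let l ∈ ℝ^n satisfy |w^{(k)}| ≤ l^{(k)} for each k, let γ > 0 and b₁ ∈ ℝ. Define H_j = f(x_j) · w + (1/2)‖h(x_j)‖₂² + (1_n·l·β + (1/2)β̃)·c_j + (1/(2γ))·(ḡ(x_j)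 + β̄ c_j)·(1_n·l)². If H_j ≤ −b₁ for every j = 0, ..., n, then for every x ∈ σ: w · f(x) + (1/(2γ))·‖G(x)ᵀ w‖₂² + (1/2)·‖h(x)‖₂² ≤ −b₁. -/
open scoped BigOperators

/-- The operator norm induced by the vector `∞`-norm: the maximum absolute row sum. -/
noncomputable def matInfNorm {n m : ℕ} (A : Matrix (Fin n) (Fin m) ℝ) : ℝ :=
  ⨆ i, ∑ j, |A i j|

namespace HJ

open Set

variable {n : ℕ}

lemma hasFDerivAt_fderiv {φ : EuclideanSpace ℝ (Fin n) → ℝ} {U : Set (EuclideanSpace ℝ (Fin n))}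
    (hU : IsOpen U) (hφ : ContDiffOn ℝ 2 φ U) {ξ} (hξ : ξ ∈ U) :
    HasFDerivAt (fderiv ℝ φ) (fderiv ℝ (fderiv ℝ φ) ξ) ξ := by
  have h2 : ContDiffAt ℝ 2 φ ξ := hφ.contDiffAt (hU.mem_nhds hξ)
  have h1 : ContDiffAt ℝ 1 (fderiv ℝ φ) ξ := h2.fderiv_right (by norm_num)
  exact (h1.differentiableAt one_ne_zero).hasFDerivAt

lemma hasFDerivAt_apply {φ : EuclideanSpace ℝ (Fin n) → ℝ} {U : Set (EuclideanSpace ℝ (Fin n))}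
    (hU : IsOpen U) (hφ : ContDiffOn ℝ 2 φ U) {ξ} (hξ : ξ ∈ U) (u : EuclideanSpace ℝ (Fin n)) :
    HasFDerivAt (fun z => fderiv ℝ φ z u) ((fderiv ℝ (fderiv ℝ φ) ξ).flip u) ξ := by
  have := (hasFDerivAt_fderiv hU hφ hξ).clm_apply (hasFDerivAt_const u ξ)
  simpa using this

lemma secondPartial_eq {φ : EuclideanSpace ℝ (Fin n) → ℝ} {U : Set (EuclideanSpace ℝ (Fin n))}
    (hU : IsOpen U) (hφ : ContDiffOn ℝ 2 φ U) {ξ} (hξ : ξ ∈ U) (q r : Fin n) :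
    secondPartial φ ξ q r
      = fderiv ℝ (fderiv ℝ φ) ξ (EuclideanSpace.single r 1) (EuclideanSpace.single q 1) := by
  have h := (hasFDerivAt_apply hU hφ hξ (EuclideanSpace.single q 1)).fderiv
  rw [secondPartial, h]
  rfl

lemma decomp (v : EuclideanSpace ℝ (Fin n)) :
    v = ∑ q : Fin n, v q • EuclideanSpace.single q (1:ℝ) := by
  ext i
  rw [WithLp.ofLp_sum, Finset.sum_apply]
  simp [EuclideanSpace.single_apply]


lemma clm_expand (T : EuclideanSpace ℝ (Fin n) →L[ℝ] ℝ) (v : EuclideanSpace ℝ (Fin n)) :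
    T v = ∑ q : Fin n, v q * T (EuclideanSpace.single q 1) := by
  conv_lhs => rw [decomp v]
  rw [map_sum]
  exact Finset.sum_congr rfl (fun q _ => by rw [map_smul]; simp [smul_eq_mul])

lemma bilin_expand (Ψ : EuclideanSpace ℝ (Fin n) →L[ℝ] EuclideanSpace ℝ (Fin n) →L[ℝ] ℝ)
    (v : EuclideanSpace ℝ (Fin n)) :
    Ψ v v = ∑ r : Fin n, ∑ q : Fin n,
      v r * v q * Ψ (EuclideanSpace.single r 1) (EuclideanSpace.single q 1) := by
  have h0 : Ψ v v = Ψ.flip v v := rfl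
  rw [h0, clm_expand (Ψ.flip v) v]
  refine Finset.sum_congr rfl (fun r _ => ?_)
  have h1 : Ψ.flip v (EuclideanSpace.single r 1) = Ψ (EuclideanSpace.single r 1) v := rfl
  rw [h1, clm_expand (Ψ (EuclideanSpace.single r 1)) v, Finset.mul_sum]
  exact Finset.sum_congr rfl (fun q _ => by ring)

lemma bilin_bound {B : ℝ} (Ψ : EuclideanSpace ℝ (Fin n) →L[ℝ] EuclideanSpace ℝ (Fin n) →L[ℝ] ℝ)
    (v : EuclideanSpace ℝ (Fin n))
    (hB : ∀ q r : Fin n, |Ψ (EuclideanSpace.single r 1) (EuclideanSpace.single q 1)| ≤ B) :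
    |Ψ v v| ≤ B * (∑ q : Fin n, |v q|)^2 := by
  rw [bilin_expand]
  calc |∑ r : Fin n, ∑ q : Fin n,
      v r * v q * Ψ (EuclideanSpace.single r 1) (EuclideanSpace.single q 1)|
      ≤ ∑ r : Fin n, ∑ q : Fin n, |v r| * |v q| * B := by
        refine (Finset.abs_sum_le_sum_abs _ _).trans (Finset.sum_le_sum fun r _ => ?_)
        refine (Finset.abs_sum_le_sum_abs _ _).trans (Finset.sum_le_sum fun q' _ => ?_)
        rw [abs_mul, abs_mul]
        exact mul_le_mul_of_nonneg_left (hB q' r) (by positivity)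
    _ = B * (∑ q : Fin n, |v q|)^2 := by
        rw [sq, Finset.sum_mul_sum]
        rw [Finset.mul_sum]
        refine Finset.sum_congr rfl (fun r _ => ?_)
        rw [Finset.mul_sum]
        exact Finset.sum_congr rfl (fun q' _ => by ring)


lemma variance1D {N : ℕ} (lam t : Fin N → ℝ) (hlam1 : ∑ j, lam j = 1) :
    ∑ j, lam j * (t j - ∑ k, lam k * t k)^2 ≤ ∑ j, lam j * (t j)^2 := by
  set T := ∑ k, lam k * t k with hT
  have hexp : ∀ j, lam j * (t j - T)^2
      = lam j * (t j)^2 - 2*T*(lam j * t j) + T^2 * lam j := fun j => by ring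
  rw [Finset.sum_congr rfl (fun j _ => hexp j), Finset.sum_add_distrib,
    Finset.sum_sub_distrib, ← Finset.mul_sum, ← Finset.mul_sum, hlam1, ← hT]
  nlinarith [sq_nonneg T]

lemma norm_sq_eq {n : ℕ} (u : EuclideanSpace ℝ (Fin n)) : ‖u‖^2 = ∑ q, (u q)^2 := by
  rw [EuclideanSpace.norm_eq, Real.sq_sqrt (by positivity)]
  exact Finset.sum_congr rfl (fun q _ => by rw [Real.norm_eq_abs, sq_abs])


variable {n : ℕ}
open HJ Set

lemma taylor_seg {φ : EuclideanSpace ℝ (Fin n) → ℝ} {U : Set (EuclideanSpace ℝ (Fin n))}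
    (hU : IsOpen U) (hφ : ContDiffOn ℝ 2 φ U)
    (a v : EuclideanSpace ℝ (Fin n))
    (hseg : ∀ t ∈ Icc (0:ℝ) 1, a + t • v ∈ U) {B : ℝ}
    (hB : ∀ t ∈ Icc (0:ℝ) 1, ∀ q r : Fin n, |secondPartial φ (a + t • v) q r| ≤ B) :
    |φ (a + v) - φ a - fderiv ℝ φ a v| ≤ B / 2 * (∑ q : Fin n, |v q|)^2 := by
  set p : ℝ → EuclideanSpace ℝ (Fin n) := fun t => a + t • v with hp_def
  have hdiffφ : ∀ z ∈ U, DifferentiableAt ℝ φ z := fun z hz =>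
    (hφ.contDiffAt (hU.mem_nhds hz)).differentiableAt (by norm_num)
  have hp : ∀ t : ℝ, HasDerivAt p v t := by
    intro t
    exact (((hasDerivAt_id t).smul_const v).const_add a).congr_deriv (one_smul ℝ v)
  set g : ℝ → ℝ := fun t => φ (p t) with hg_def
  set g1 : ℝ → ℝ := fun t => fderiv ℝ φ (p t) v with hg1_def
  have hg : ∀ t ∈ Icc (0:ℝ) 1, HasDerivAt g (g1 t) t := by
    intro t ht
    exact ((hdiffφ _ (hseg t ht)).hasFDerivAt).comp_hasDerivAt t (hp t)
  have hg1 : ∀ t ∈ Icc (0:ℝ) 1,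
      HasDerivAt g1 (fderiv ℝ (fderiv ℝ φ) (p t) v v) t := by
    intro t ht
    have h2 := (hasFDerivAt_apply hU hφ (hseg t ht) v).comp_hasDerivAt t (hp t)
    exact h2
  -- contDiff of g on Icc
  have hpcd : ContDiff ℝ 2 p := by
    apply ContDiff.add contDiff_const
    exact ContDiff.smul contDiff_id contDiff_const
  have hgc : ContDiffOn ℝ 1 g (Icc 0 1) := by
    have : ContDiffOn ℝ 2 g (Icc 0 1) :=
      (hφ.comp (hpcd.contDiffOn) (fun t ht => hseg t ht))
    exact this.of_le (by norm_num)
  have hud : UniqueDiffOn ℝ (Icc (0:ℝ) 1) := uniqueDiffOn_Icc zero_lt_one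
  have heq : Set.EqOn (iteratedDerivWithin 1 g (Icc 0 1)) g1 (Icc 0 1) := by
    intro s hs
    rw [iteratedDerivWithin_one]
    exact (hg s hs).hasDerivWithinAt.derivWithin (hud s hs)
  have hdo : DifferentiableOn ℝ (iteratedDerivWithin 1 g (Icc 0 1)) (Ioo 0 1) := by
    intro t ht
    have h1 : DifferentiableWithinAt ℝ g1 (Ioo (0:ℝ) 1) t :=
      ((hg1 t (Ioo_subset_Icc_self ht)).differentiableAt).differentiableWithinAt
    exact h1.congr (fun y hy => heq (Ioo_subset_Icc_self hy)) (heq (Ioo_subset_Icc_self ht))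
  obtain ⟨c, hc, hcc⟩ := taylor_mean_remainder_lagrange (n := 1) (x₀ := 0) (x := 1) zero_ne_one
    (by rw [uIcc_of_le zero_le_one]; exact hgc)
    (by rw [uIcc_of_le zero_le_one, uIoo_of_le zero_le_one]; exact hdo)
  rw [uIcc_of_le zero_le_one] at hcc
  rw [uIoo_of_le zero_le_one] at hc
  have hcI : c ∈ Icc (0:ℝ) 1 := Ioo_subset_Icc_self hc
  -- evaluate taylor polynomial
  have htay : taylorWithinEval g 1 (Icc 0 1) 0 1 = g 0 + g1 0 := by
    rw [taylor_within_apply]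
    rw [Finset.sum_range_succ, Finset.sum_range_one]
    rw [iteratedDerivWithin_zero, iteratedDerivWithin_one]
    have : derivWithin g (Icc 0 1) 0 = g1 0 :=
      (hg 0 (by norm_num)).hasDerivWithinAt.derivWithin (hud 0 (by norm_num))
    rw [this]
    norm_num
  -- second derivative
  have hit2 : iteratedDerivWithin 2 g (Icc 0 1) c = fderiv ℝ (fderiv ℝ φ) (p c) v v := by
    rw [iteratedDerivWithin_succ]
    rw [derivWithin_congr heq (heq hcI)]
    exact (hg1 c hcI).hasDerivWithinAt.derivWithin (hud c hcI)
  rw [htay, hit2] at hcc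
  have hgv : g 1 = φ (a + v) := by simp [hg_def, hp_def]
  have hg0 : g 0 = φ a := by simp [hg_def, hp_def]
  have hg10 : g1 0 = fderiv ℝ φ a v := by simp [hg1_def, hp_def]
  rw [hgv, hg0, hg10] at hcc
  have hbound : |fderiv ℝ (fderiv ℝ φ) (p c) v v| ≤ B * (∑ q : Fin n, |v q|)^2 := by
    apply bilin_bound
    intro q r
    rw [← secondPartial_eq hU hφ (hseg c hcI) q r]
    exact hB c hcI q r
  norm_num at hcc
  have habs := abs_le.mp hbound
  rw [abs_le]; constructor <;> linarith [hcc, habs.1, habs.2]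

lemma convex_interp (x : Fin (n+1) → EuclideanSpace ℝ (Fin n))
    {φ : EuclideanSpace ℝ (Fin n) → ℝ} {U : Set (EuclideanSpace ℝ (Fin n))}
    (hU : IsOpen U) (hσU : convexHull ℝ (Set.range x) ⊆ U) (hφ : ContDiffOn ℝ 2 φ U)
    {B : ℝ} (hB0 : 0 ≤ B)
    (hB : ∀ ξ ∈ convexHull ℝ (Set.range x), ∀ q r : Fin n, |secondPartial φ ξ q r| ≤ B)
    (lam : Fin (n+1) → ℝ) (hlam0 : ∀ j, 0 ≤ lam j) (hlam1 : ∑ j, lam j = 1) :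
    φ (∑ j, lam j • x j) ≤ ∑ j, lam j * φ (x j) + B * ∑ j, lam j * simplexConst x j := by
  set xb : EuclideanSpace ℝ (Fin n) := ∑ j, lam j • x j with hxb_def
  have hxb : xb ∈ convexHull ℝ (Set.range x) := by
    have h1 := Finset.centerMass_mem_convexHull (t := Finset.univ) (w := lam)
      (fun i _ => hlam0 i) (by rw [hlam1]; norm_num)
      (z := x) (fun i _ => Set.mem_range_self i)
    rwa [Finset.centerMass_eq_of_sum_1 _ x hlam1] at h1
  have hseg : ∀ (j : Fin (n+1)), ∀ t ∈ Icc (0:ℝ) 1,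
      xb + t • (x j - xb) ∈ convexHull ℝ (Set.range x) := by
    intro j t ht
    have hxj : x j ∈ convexHull ℝ (Set.range x) := subset_convexHull ℝ _ (Set.mem_range_self j)
    refine (convex_convexHull ℝ (Set.range x)).segment_subset hxb hxj ?_
    exact ⟨1 - t, t, by linarith [ht.2], ht.1, by ring, by
      rw [sub_smul, one_smul, smul_sub]; abel⟩
  -- Taylor estimate for each vertex
  set S : Fin (n+1) → ℝ := fun j => (∑ q, |(x j - xb) q|)^2 with hS_def
  have hT : ∀ j, |φ (x j) - φ xb - fderiv ℝ φ xb (x j - xb)| ≤ B/2 * S j := by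
    intro j
    have := taylor_seg hU hφ xb (x j - xb)
      (fun t ht => hσU (hseg j t ht)) (fun t ht q r => hB _ (hseg j t ht) q r)
    simpa [hS_def] using this
  -- gradient cancellation
  have hsum0 : ∑ j, lam j • (x j - xb) = (0 : EuclideanSpace ℝ (Fin n)) := by
    simp only [smul_sub, Finset.sum_sub_distrib, ← hxb_def]
    rw [← Finset.sum_smul, hlam1, one_smul, sub_self]
  have hgrad : ∑ j, lam j * fderiv ℝ φ xb (x j - xb) = 0 := by
    have h1 : ∑ j, lam j * fderiv ℝ φ xb (x j - xb)
        = fderiv ℝ φ xb (∑ j, lam j • (x j - xb)) := by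
      rw [map_sum]
      exact Finset.sum_congr rfl fun j _ => by rw [map_smul, smul_eq_mul]
    rw [h1, hsum0, map_zero]
  -- main estimate with S
  have key : φ xb ≤ ∑ j, lam j * φ (x j) + ∑ j, lam j * (B/2 * S j) := by
    set r : Fin (n+1) → ℝ := fun j => φ (x j) - φ xb - fderiv ℝ φ xb (x j - xb) with hr_def
    have hsplit : ∑ j, lam j * φ (x j) = φ xb + ∑ j, lam j * r j := by
      have h2 : ∀ j, lam j * φ (x j)
          = lam j * φ xb + lam j * fderiv ℝ φ xb (x j - xb) + lam j * r j := by
        intro j; simp only [hr_def]; ring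
      rw [Finset.sum_congr rfl fun j _ => h2 j, Finset.sum_add_distrib,
        Finset.sum_add_distrib, hgrad, ← Finset.sum_mul, hlam1, one_mul, add_zero]
    have h3 : ∑ j, lam j * (- r j) ≤ ∑ j, lam j * (B/2 * S j) := by
      refine Finset.sum_le_sum fun j _ => ?_
      refine mul_le_mul_of_nonneg_left ?_ (hlam0 j)
      calc -r j ≤ |r j| := neg_le_abs _
        _ ≤ B/2 * S j := hT j
    have h4 : ∑ j, lam j * (- r j) = - ∑ j, lam j * r j := by
      rw [← Finset.sum_neg_distrib]
      exact Finset.sum_congr rfl fun j _ => by ring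
    rw [h4] at h3
    linarith [hsplit, h3]
  -- bound S by coordinates and variance
  have hCS : ∀ j, S j ≤ (n : ℝ) * ∑ q, ((x j - xb) q)^2 := by
    intro j
    have := Finset.sum_mul_sq_le_sq_mul_sq Finset.univ (fun _ => (1:ℝ))
      (fun q => |(x j - xb) q|)
    simpa [hS_def, sq_abs, Finset.card_univ] using this
  have hvar : ∑ j, lam j * ((n : ℝ) * ∑ q, ((x j - xb) q)^2)
      ≤ ∑ j, lam j * ((n : ℝ) * ‖x j - x 0‖^2) := by
    have hswap : ∀ (u : Fin (n+1) → ℝ),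
        ∑ j, lam j * ((n:ℝ) * u j) = (n:ℝ) * ∑ j, lam j * u j := by
      intro u; rw [Finset.mul_sum]; exact Finset.sum_congr rfl fun j _ => by ring
    rw [hswap (fun j => ∑ q, ((x j - xb) q)^2), hswap (fun j => ‖x j - x 0‖^2)]
    refine mul_le_mul_of_nonneg_left ?_ (Nat.cast_nonneg n)
    -- swap sums and use per-coordinate variance
    have hL : ∑ j, lam j * ∑ q, ((x j - xb) q)^2
        = ∑ q, ∑ j, lam j * ((x j - xb) q)^2 := by
      rw [Finset.sum_comm]
      exact Finset.sum_congr rfl fun j _ => Finset.mul_sum _ _ _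
    have hR : ∑ j, lam j * ‖x j - x 0‖^2
        = ∑ q, ∑ j, lam j * ((x j - x 0) q)^2 := by
      rw [Finset.sum_comm]
      refine Finset.sum_congr rfl fun j _ => ?_
      rw [norm_sq_eq (x j - x 0), Finset.mul_sum]
    rw [hL, hR]
    refine Finset.sum_le_sum fun q _ => ?_
    -- per coordinate q: variance
    have hxbq : xb q - x 0 q = ∑ k, lam k * ((x k) q - x 0 q) := by
      have h5 : xb q = ∑ k, lam k * (x k) q := by
        rw [hxb_def, WithLp.ofLp_sum, Finset.sum_apply]
        exact Finset.sum_congr rfl fun k _ => rfl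
      rw [Finset.sum_congr rfl (fun k (_ : k ∈ Finset.univ) =>
        (mul_sub (lam k) ((x k) q) (x 0 q))), Finset.sum_sub_distrib, ← h5,
        ← Finset.sum_mul, hlam1, one_mul]
    have hv := variance1D lam (fun k => (x k) q - x 0 q) hlam1
    have heq2 : ∀ j, (x j - xb) q = ((x j) q - x 0 q) - ∑ k, lam k * ((x k) q - x 0 q) := by
      intro j
      rw [← hxbq]
      show (x j) q - xb q = _
      ring
    calc ∑ j, lam j * ((x j - xb) q)^2
        = ∑ j, lam j * (((x j) q - x 0 q) - ∑ k, lam k * ((x k) q - x 0 q))^2 :=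
          Finset.sum_congr rfl fun j _ => by rw [heq2 j]
      _ ≤ ∑ j, lam j * ((x j) q - x 0 q)^2 := hv
      _ = ∑ j, lam j * ((x j - x 0) q)^2 := Finset.sum_congr rfl fun j _ => rfl
  -- from norms to simplexConst
  have hM : (0:ℝ) ≤ ⨆ k : Fin n, ‖x k.succ - x 0‖ := Real.iSup_nonneg fun k => norm_nonneg _
  have hfin : ∑ j, lam j * (B/2 * ((n : ℝ) * ‖x j - x 0‖^2))
      ≤ B * ∑ j, lam j * simplexConst x j := by
    rw [Finset.mul_sum]
    refine Finset.sum_le_sum fun j _ => ?_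
    have ha : (0:ℝ) ≤ ‖x j - x 0‖ := norm_nonneg _
    have h6 : B/2 * ((n : ℝ) * ‖x j - x 0‖^2) ≤ B * simplexConst x j := by
      rw [simplexConst]
      have h7 : ‖x j - x 0‖^2 ≤ ‖x j - x 0‖ * ((⨆ k : Fin n, ‖x k.succ - x 0‖) + ‖x j - x 0‖) := by
        nlinarith [mul_nonneg ha hM]
      calc B/2 * ((n : ℝ) * ‖x j - x 0‖^2)
          ≤ B/2 * ((n : ℝ) * (‖x j - x 0‖ * ((⨆ k : Fin n, ‖x k.succ - x 0‖) + ‖x j - x 0‖))) := by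
            refine mul_le_mul_of_nonneg_left ?_ (by linarith)
            exact mul_le_mul_of_nonneg_left h7 (Nat.cast_nonneg n)
        _ = B * ((n:ℝ)/2 * ‖x j - x 0‖ * ((⨆ k : Fin n, ‖x k.succ - x 0‖) + ‖x j - x 0‖)) := by
            ring
    calc lam j * (B/2 * ((n : ℝ) * ‖x j - x 0‖^2))
        ≤ lam j * (B * simplexConst x j) := mul_le_mul_of_nonneg_left h6 (hlam0 j)
      _ = B * (lam j * simplexConst x j) := by ring
  -- chain everything
  have hmid : ∑ j, lam j * (B/2 * S j)
      ≤ ∑ j, lam j * (B/2 * ((n : ℝ) * ‖x j - x 0‖^2)) := by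
    calc ∑ j, lam j * (B/2 * S j)
        ≤ ∑ j, lam j * (B/2 * ((n : ℝ) * ∑ q, ((x j - xb) q)^2)) := by
          refine Finset.sum_le_sum fun j _ => ?_
          refine mul_le_mul_of_nonneg_left (mul_le_mul_of_nonneg_left (hCS j) (by linarith)) (hlam0 j)
      _ ≤ ∑ j, lam j * (B/2 * ((n : ℝ) * ‖x j - x 0‖^2)) := by
          have h8 : ∀ (u : Fin (n+1) → ℝ), ∑ j, lam j * (B/2 * u j)
              = B/2 * ∑ j, lam j * u j := by
            intro u; rw [Finset.mul_sum]; exact Finset.sum_congr rfl fun j _ => by ring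
          rw [h8 (fun j => (n:ℝ) * ∑ q, ((x j - xb) q)^2),
            h8 (fun j => (n:ℝ) * ‖x j - x 0‖^2)]
          exact mul_le_mul_of_nonneg_left hvar (by linarith)
  linarith [key, hmid, hfin]

lemma secondPartial_sum {N : ℕ} {U : Set (EuclideanSpace ℝ (Fin n))} (hU : IsOpen U)
    {F : EuclideanSpace ℝ (Fin n) → Fin N → ℝ} (hF : ∀ k, ContDiffOn ℝ 2 (fun z => F z k) U)
    (w : Fin N → ℝ) {ξ} (hξ : ξ ∈ U) (q r : Fin n) :
    secondPartial (fun z => ∑ k, w k * F z k) ξ q r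
      = ∑ k, w k * secondPartial (fun z => F z k) ξ q r := by
  have hD : ∀ (k : Fin N) (z : EuclideanSpace ℝ (Fin n)), z ∈ U →
      DifferentiableAt ℝ (fun y => F y k) z := fun k z hz =>
    ((hF k).contDiffAt (hU.mem_nhds hz)).differentiableAt (by norm_num)
  have stepA : ∀ z ∈ U, fderiv ℝ (fun y => ∑ k, w k * F y k) z (EuclideanSpace.single q 1)
      = ∑ k, w k * fderiv ℝ (fun y => F y k) z (EuclideanSpace.single q 1) := by
    intro z hz
    have hFd : HasFDerivAt (fun y => ∑ k, w k * F y k)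
        (∑ k, w k • fderiv ℝ (fun y => F y k) z) z :=
      HasFDerivAt.fun_sum (fun k _ => (((hD k z hz).hasFDerivAt).const_mul (w k)))
    rw [hFd.fderiv, ContinuousLinearMap.sum_apply]
    exact Finset.sum_congr rfl fun k _ => by rw [ContinuousLinearMap.smul_apply, smul_eq_mul]
  have hev : (fun z => fderiv ℝ (fun y => ∑ k, w k * F y k) z (EuclideanSpace.single q 1))
      =ᶠ[nhds ξ] (fun z => ∑ k, w k * fderiv ℝ (fun y => F y k) z (EuclideanSpace.single q 1)) :=
    Filter.eventually_of_mem (hU.mem_nhds hξ) stepA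
  have hFd2 : HasFDerivAt
      (fun z => ∑ k, w k * fderiv ℝ (fun y => F y k) z (EuclideanSpace.single q 1))
      (∑ k, w k • ((fderiv ℝ (fderiv ℝ (fun y => F y k)) ξ).flip (EuclideanSpace.single q 1))) ξ :=
    HasFDerivAt.fun_sum (fun k _ =>
      ((hasFDerivAt_apply hU (hF k) hξ (EuclideanSpace.single q 1)).const_mul (w k)))
  rw [secondPartial, hev.fderiv_eq, hFd2.fderiv, ContinuousLinearMap.sum_apply]
  refine Finset.sum_congr rfl fun k _ => ?_
  rw [ContinuousLinearMap.smul_apply, smul_eq_mul, secondPartial_eq hU (hF k) hξ q r]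
  rfl

lemma matrix_quad {m : ℕ} (hn : 0 < n) (A : Matrix (Fin n) (Fin m) ℝ) (w l : Fin n → ℝ)
    (hwl : ∀ k, |w k| ≤ l k) :
    ∑ i, (A.transpose.mulVec w i)^2 ≤ matInfNorm (A * A.transpose) * (∑ k, l k)^2 := by
  have hl0 : ∀ k, 0 ≤ l k := fun k => (abs_nonneg _).trans (hwl k)
  set M : Matrix (Fin n) (Fin n) ℝ := A * A.transpose with hM
  have hrow : ∀ k, ∑ p, |M k p| ≤ matInfNorm M := by
    intro k
    rw [matInfNorm]
    exact le_ciSup (f := fun i => ∑ p, |M i p|) (Set.Finite.bddAbove (Set.finite_range _)) k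
  have hMn : 0 ≤ matInfNorm M := by
    refine le_trans ?_ (hrow ⟨0, hn⟩)
    exact Finset.sum_nonneg fun p _ => abs_nonneg _
  have hentry : ∀ k p, |M k p| ≤ matInfNorm M := fun k p => by
    refine le_trans ?_ (hrow k)
    exact Finset.single_le_sum (fun p' (_ : p' ∈ Finset.univ) => abs_nonneg (M k p'))
      (Finset.mem_univ p)
  have hmv : ∀ i, A.transpose.mulVec w i = ∑ k, A k i * w k := by
    intro i
    simp [Matrix.mulVec, dotProduct, Matrix.transpose_apply]
  have key : ∑ i, (A.transpose.mulVec w i)^2 = ∑ k, ∑ p, w k * w p * M k p := by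
    calc ∑ i, (A.transpose.mulVec w i)^2
        = ∑ i, ∑ k, ∑ p, (A k i * w k) * (A p i * w p) := by
          refine Finset.sum_congr rfl fun i _ => ?_
          rw [hmv i, sq, Finset.sum_mul_sum]
      _ = ∑ k, ∑ i, ∑ p, (A k i * w k) * (A p i * w p) := Finset.sum_comm
      _ = ∑ k, ∑ p, ∑ i, (A k i * w k) * (A p i * w p) :=
          Finset.sum_congr rfl fun k _ => Finset.sum_comm
      _ = ∑ k, ∑ p, w k * w p * M k p := by
          refine Finset.sum_congr rfl fun k _ => Finset.sum_congr rfl fun p _ => ?_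
          rw [hM, Matrix.mul_apply, Finset.mul_sum]
          exact Finset.sum_congr rfl fun i _ => by
            rw [Matrix.transpose_apply]; ring
  rw [key]
  calc ∑ k, ∑ p, w k * w p * M k p
      ≤ ∑ k, ∑ p, l k * l p * matInfNorm M := by
        refine Finset.sum_le_sum fun k _ => Finset.sum_le_sum fun p _ => ?_
        calc w k * w p * M k p ≤ |w k * w p * M k p| := le_abs_self _
          _ = |w k| * |w p| * |M k p| := by rw [abs_mul, abs_mul]
          _ ≤ l k * l p * matInfNorm M := by
            refine mul_le_mul (mul_le_mul (hwl k) (hwl p) (abs_nonneg _) (hl0 k))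
              (hentry k p) (abs_nonneg _) (mul_nonneg (hl0 k) (hl0 p))
    _ = matInfNorm M * (∑ k, l k)^2 := by
        rw [sq, Finset.sum_mul_sum, Finset.mul_sum]
        refine Finset.sum_congr rfl fun k _ => ?_
        rw [Finset.mul_sum]
        exact Finset.sum_congr rfl fun p _ => by ring

end HJ

open HJ

/-- if the vertex quantities `H_j` are all `≤ −b₁`, then the Hamilton–Jacobi
expression `w·f(x) + (1/(2γ))‖G(x)ᵀw‖₂² + (1/2)‖h(x)‖₂²` is `≤ −b₁` on the whole simplex. -/
theorem hj_vertex_bound (n m q : ℕ) (x : Fin (n + 1) → EuclideanSpace ℝ (Fin n))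
    (hx : LinearIndependent ℝ (fun k : Fin n => x k.succ - x 0))
    (f : EuclideanSpace ℝ (Fin n) → (Fin n → ℝ))
    (h : EuclideanSpace ℝ (Fin n) → (Fin q → ℝ))
    (G : EuclideanSpace ℝ (Fin n) → Matrix (Fin n) (Fin m) ℝ)
    (β βtilde βbar : ℝ)
    (U : Set (EuclideanSpace ℝ (Fin n))) (hU : IsOpen U)
    (hσU : convexHull ℝ (Set.range x) ⊆ U)
    (hf : ContDiffOn ℝ 2 f U)
    (hhbar : ContDiffOn ℝ 2 (fun z => ∑ i, (h z i) ^ 2) U)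
    (hgbar : ContDiffOn ℝ 2 (fun z => matInfNorm (G z * (G z).transpose)) U)
    (hβ : ∀ ξ ∈ convexHull ℝ (Set.range x), ∀ p q' r : Fin n,
      |secondPartial (fun z => f z p) ξ q' r| ≤ β)
    (hβtilde : ∀ ξ ∈ convexHull ℝ (Set.range x), ∀ q' r : Fin n,
      |secondPartial (fun z => ∑ i, (h z i) ^ 2) ξ q' r| ≤ βtilde)
    (hβbar : ∀ ξ ∈ convexHull ℝ (Set.range x), ∀ q' r : Fin n,
      |secondPartial (fun z => matInfNorm (G z * (G z).transpose)) ξ q' r| ≤ βbar)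
    (w l : Fin n → ℝ) (hwl : ∀ k, |w k| ≤ l k)
    (γ b₁ : ℝ) (hγ : 0 < γ)
    (hH : ∀ j : Fin (n + 1),
      (∑ k, f (x j) k * w k) + (1 / 2) * (∑ i, (h (x j) i) ^ 2)
        + ((∑ k, l k) * β + (1 / 2) * βtilde) * simplexConst x j
        + (1 / (2 * γ)) * (matInfNorm (G (x j) * (G (x j)).transpose)
            + βbar * simplexConst x j) * (∑ k, l k) ^ 2
        ≤ -b₁)
    (lam : Fin (n + 1) → ℝ) (hlam0 : ∀ j, 0 ≤ lam j) (hlam1 : ∑ j, lam j = 1) :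
    (∑ k, w k * f (∑ j, lam j • x j) k)
      + (1 / (2 * γ)) *
          (∑ i, ((G (∑ j, lam j • x j)).transpose.mulVec w i) ^ 2)
      + (1 / 2) * (∑ i, (h (∑ j, lam j • x j) i) ^ 2) ≤ -b₁ := by
  rcases Nat.eq_zero_or_pos n with hn0 | hn
  · -- degenerate case n = 0
    subst hn0
    haveI : Subsingleton (EuclideanSpace ℝ (Fin 0)) :=
      ⟨fun a b => by ext i; exact i.elim0⟩
    have hxx : (∑ j, lam j • x j) = x 0 := Subsingleton.elim _ _
    have hc : simplexConst x 0 = 0 := by simp [simplexConst]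
    have hH0 := hH 0
    rw [hc] at hH0
    simp only [Finset.univ_eq_empty, Finset.sum_empty] at hH0
    have hmv : ∑ i : Fin m, ((G (x 0)).transpose.mulVec w i)^2 = 0 := by
      refine Finset.sum_eq_zero fun i _ => ?_
      have h2 : (G (x 0)).transpose.mulVec w i = 0 := by
        simp [Matrix.mulVec, dotProduct]
      rw [h2]; ring
    simp only [hxx, hmv]
    simp only [Finset.univ_eq_empty, Finset.sum_empty]
    norm_num at hH0 ⊢
    linarith
  · -- main case
    set σ : Set (EuclideanSpace ℝ (Fin n)) := convexHull ℝ (Set.range x) with hσ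
    have hx0σ : x 0 ∈ σ := subset_convexHull ℝ _ (Set.mem_range_self 0)
    set q0 : Fin n := ⟨0, hn⟩ with hq0
    have hβ0 : 0 ≤ β := (abs_nonneg _).trans (hβ (x 0) hx0σ q0 q0 q0)
    have hβt0 : 0 ≤ βtilde := (abs_nonneg _).trans (hβtilde (x 0) hx0σ q0 q0)
    have hβb0 : 0 ≤ βbar := (abs_nonneg _).trans (hβbar (x 0) hx0σ q0 q0)
    have hl0 : ∀ k, 0 ≤ l k := fun k => (abs_nonneg _).trans (hwl k)
    set L : ℝ := ∑ k, l k with hL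
    have hL0 : 0 ≤ L := Finset.sum_nonneg fun k _ => hl0 k
    -- component functions of f
    have hfk : ∀ k : Fin n, ContDiffOn ℝ 2 (fun z => f z k) U := by
      intro k
      exact (ContinuousLinearMap.proj k (R := ℝ) (φ := fun _ : Fin n => ℝ)).contDiff.comp_contDiffOn hf
    set φ₁ : EuclideanSpace ℝ (Fin n) → ℝ := fun z => ∑ k, w k * f z k with hφ₁
    have hφ₁cd : ContDiffOn ℝ 2 φ₁ U := by
      apply ContDiffOn.sum
      intro k _
      exact contDiffOn_const.mul (hfk k)
    have hSP1 : ∀ ξ ∈ σ, ∀ q' r : Fin n, |secondPartial φ₁ ξ q' r| ≤ L * β := by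
      intro ξ hξ q' r
      rw [hφ₁]
      rw [secondPartial_sum hU hfk w (hσU hξ) q' r]
      calc |∑ k, w k * secondPartial (fun z => f z k) ξ q' r|
          ≤ ∑ k, |w k * secondPartial (fun z => f z k) ξ q' r| :=
            Finset.abs_sum_le_sum_abs _ _
        _ ≤ ∑ k, l k * β := by
            refine Finset.sum_le_sum fun k _ => ?_
            rw [abs_mul]
            exact mul_le_mul (hwl k) (hβ ξ hξ k q' r) (abs_nonneg _) (hl0 k)
        _ = L * β := by rw [hL, Finset.sum_mul]
    -- the three interpolation bounds
    set S : ℝ := ∑ j, lam j * simplexConst x j with hS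
    have interp1 : φ₁ (∑ j, lam j • x j) ≤ ∑ j, lam j * φ₁ (x j) + (L * β) * S :=
      convex_interp x hU hσU hφ₁cd (mul_nonneg hL0 hβ0) hSP1 lam hlam0 hlam1
    have interp2 : matInfNorm (G (∑ j, lam j • x j) * (G (∑ j, lam j • x j)).transpose)
        ≤ ∑ j, lam j * matInfNorm (G (x j) * (G (x j)).transpose) + βbar * S :=
      convex_interp x hU hσU hgbar hβb0 hβbar lam hlam0 hlam1
    have interp3 : (∑ i, (h (∑ j, lam j • x j) i) ^ 2)
        ≤ ∑ j, lam j * (∑ i, (h (x j) i) ^ 2) + βtilde * S :=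
      convex_interp x hU hσU hhbar hβt0 hβtilde lam hlam0 hlam1
    have quad := matrix_quad hn (G (∑ j, lam j • x j)) w l hwl
    -- sum of vertex inequalities
    set T1 : ℝ := ∑ j, lam j * φ₁ (x j) with hT1
    set T2 : ℝ := ∑ j, lam j * matInfNorm (G (x j) * (G (x j)).transpose) with hT2
    set T3 : ℝ := ∑ j, lam j * (∑ i, (h (x j) i) ^ 2) with hT3
    have hsum : T1 + (1/2) * T3 + (L * β + (1/2) * βtilde) * S
        + (1/(2*γ)) * (T2 + βbar * S) * L^2 ≤ -b₁ := by
      have hje : ∀ j : Fin (n+1),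
          lam j * (φ₁ (x j) + (1 / 2) * (∑ i, (h (x j) i) ^ 2)
            + (L * β + (1 / 2) * βtilde) * simplexConst x j
            + (1 / (2 * γ)) * (matInfNorm (G (x j) * (G (x j)).transpose)
                + βbar * simplexConst x j) * L ^ 2)
          ≤ lam j * (-b₁) := by
        intro j
        refine mul_le_mul_of_nonneg_left ?_ (hlam0 j)
        have hcomm : (∑ k, f (x j) k * w k) = φ₁ (x j) := by
          rw [hφ₁]
          exact Finset.sum_congr rfl fun k _ => mul_comm _ _
        have := hH j
        rw [hcomm] at this
        exact this
      have hsum2 := Finset.sum_le_sum (fun j (_ : j ∈ Finset.univ) => hje j)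
      rw [← Finset.sum_mul, hlam1, one_mul] at hsum2
      refine le_trans (le_of_eq ?_) hsum2
      have e1 : (1/2) * T3 = ∑ j, (1/2) * (lam j * ∑ i, (h (x j) i) ^ 2) := by
        rw [hT3, Finset.mul_sum]
      have e2 : (L * β + (1/2) * βtilde) * S
          = ∑ j, (L * β + (1/2) * βtilde) * (lam j * simplexConst x j) := by
        rw [hS, Finset.mul_sum]
      have e3 : (1/(2*γ)) * (T2 + βbar * S) * L^2
          = ∑ j, (1/(2*γ)) * (lam j * matInfNorm (G (x j) * (G (x j)).transpose)
              + βbar * (lam j * simplexConst x j)) * L^2 := by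
        rw [hT2, hS, Finset.mul_sum, ← Finset.sum_add_distrib, Finset.mul_sum,
          Finset.sum_mul]
      rw [hT1, e1, e2, e3, ← Finset.sum_add_distrib, ← Finset.sum_add_distrib,
        ← Finset.sum_add_distrib]
      exact Finset.sum_congr rfl fun j _ => by ring
    -- assemble the final bound
    have h2γ : (0:ℝ) ≤ 1/(2*γ) := by positivity
    have e2 : (1/(2*γ)) * (∑ i, ((G (∑ j, lam j • x j)).transpose.mulVec w i) ^ 2)
        ≤ (1/(2*γ)) * (T2 + βbar * S) * L^2 := by
      have step : (∑ i, ((G (∑ j, lam j • x j)).transpose.mulVec w i) ^ 2)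
          ≤ (T2 + βbar * S) * L^2 :=
        le_trans quad (mul_le_mul_of_nonneg_right interp2 (sq_nonneg L))
      calc (1/(2*γ)) * (∑ i, ((G (∑ j, lam j • x j)).transpose.mulVec w i) ^ 2)
          ≤ (1/(2*γ)) * ((T2 + βbar * S) * L^2) := mul_le_mul_of_nonneg_left step h2γ
        _ = (1/(2*γ)) * (T2 + βbar * S) * L^2 := by ring
    have e3 : (1/2) * (∑ i, (h (∑ j, lam j • x j) i) ^ 2)
        ≤ (1/2) * T3 + (1/2) * βtilde * S := by linarith
    have e1 : (∑ k, w k * f (∑ j, lam j • x j) k) ≤ T1 + (L * β) * S := interp1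
    linarith [hsum, e1, e2, e3]
end

section
/- Let T > 0, b > 0, and c₁ < c be real numbers. Let w : [0, T] → ℝ be continuous with w(0) < c, and suppose that for every t ∈ [0, T) with c₁ ≤ w(t) ≤ c, the upper right Dini derivative satisfies limsup_{h→0⁺} (w(t+h) − w(t))/h ≤ −b. Then w(t) < c for all t ∈ [0, T]. -/
open Set Filter

private lemma freq_lt_of_limsup_le {f : ℝ → ℝ} {l : Filter ℝ} [l.NeBot] {b r : ℝ}
    (hb : 0 < b) (hr : 0 < r) (h : Filter.limsup f l ≤ -b) : ∃ᶠ x in l, f x < r := by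
  by_contra hcon
  rw [Filter.not_frequently] at hcon
  have hcon' : ∀ᶠ x in l, r ≤ f x := hcon.mono fun x hx => not_lt.1 hx
  rw [Filter.limsup_eq] at h
  rcases Set.eq_empty_or_nonempty {a | ∀ᶠ x in l, f x ≤ a} with he | hne
  · rw [he] at h
    simp [Real.sInf_empty] at h
    linarith
  · have hS : ∀ a ∈ {a | ∀ᶠ x in l, f x ≤ a}, r ≤ a := by
      intro a ha
      obtain ⟨x, h1, h2⟩ := (ha.and hcon').exists
      exact h2.trans h1
    have : r ≤ sInf {a | ∀ᶠ x in l, f x ≤ a} := le_csInf hne hS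
    linarith

private lemma map_nhdsGT (x : ℝ) :
    Filter.map (fun h : ℝ => x + h) (nhdsWithin 0 (Set.Ioi 0)) = nhdsWithin x (Set.Ioi x) := by
  have := (Homeomorph.addLeft x).isEmbedding.map_nhdsWithin_eq (Set.Ioi 0) 0
  simpa [Homeomorph.addLeft, image_const_add_Ioi] using this

/-- Dini-derivative barrier argument on the real line. If `w(0) < c` and the
upper right Dini derivative of `w` is `≤ −b < 0` whenever `w(t)` lies in the shell
`[c₁, c]` (for `t ∈ [0, T)`), then `w(t) < c` on all of `[0, T]`. -/
theorem dini_barrier_invariance (T b c₁ c : ℝ) (hT : 0 < T) (hb : 0 < b) (hc : c₁ < c)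
    (w : ℝ → ℝ) (hw : ContinuousOn w (Set.Icc 0 T)) (h0 : w 0 < c)
    (hD : ∀ t ∈ Set.Ico 0 T, c₁ ≤ w t → w t ≤ c →
      Filter.limsup (fun h : ℝ => (w (t + h) - w t) / h) (nhdsWithin 0 (Set.Ioi 0)) ≤ -b) :
    ∀ t ∈ Set.Icc 0 T, w t < c := by
  by_contra hcon
  push_neg at hcon
  obtain ⟨t₁, ht₁, hct₁⟩ := hcon
  set S : Set ℝ := Icc 0 T ∩ w ⁻¹' Ici c with hSdef
  have hSclosed : IsClosed S := hw.preimage_isClosed_of_isClosed isClosed_Icc isClosed_Ici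
  have hScompact : IsCompact S := isCompact_Icc.of_isClosed_subset hSclosed inter_subset_left
  have hSne : S.Nonempty := ⟨t₁, ht₁, hct₁⟩
  set t₀ := sInf S with ht₀def
  have ht₀S : t₀ ∈ S := hScompact.sInf_mem hSne
  have ht₀Icc : t₀ ∈ Icc 0 T := ht₀S.1
  have hct₀ : c ≤ w t₀ := ht₀S.2
  -- everything before t₀ is below c
  have hbefore : ∀ t, 0 ≤ t → t < t₀ → w t < c := by
    intro t h0t htt₀
    by_contra hge
    have : t ∈ S := ⟨⟨h0t, htt₀.le.trans ht₀Icc.2⟩, not_lt.1 hge⟩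
    exact absurd (csInf_le hScompact.bddBelow this) (not_le.2 htt₀)
  have ht₀pos : 0 < t₀ := by
    rcases lt_or_eq_of_le ht₀Icc.1 with h | h
    · exact h
    · exact absurd hct₀ (by rw [← h]; exact not_le.2 h0)
  -- w t₀ = c (limit from the left)
  have hwt₀ : w t₀ = c := by
    refine le_antisymm ?_ hct₀
    have hIcosub : Ico 0 t₀ ⊆ Icc 0 T := fun t ht => ⟨ht.1, ht.2.le.trans ht₀Icc.2⟩
    have htend : Tendsto w (nhdsWithin t₀ (Ico 0 t₀)) (nhds (w t₀)) :=
      (hw t₀ ht₀Icc).mono_left (nhdsWithin_mono _ hIcosub)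
    have hne : (nhdsWithin t₀ (Ico 0 t₀)).NeBot := by
      rw [← mem_closure_iff_nhdsWithin_neBot, closure_Ico (ne_of_lt ht₀pos)]
      exact ⟨ht₀pos.le, le_rfl⟩
    exact le_of_tendsto htend (eventually_nhdsWithin_of_forall fun t ht => (hbefore t ht.1 ht.2).le)
  -- find a < t₀ with w ≥ c₁ on [a, t₀]
  have hcw : ContinuousWithinAt w (Icc 0 T) t₀ := hw t₀ ht₀Icc
  have hev : {t | c₁ < w t} ∈ nhdsWithin t₀ (Icc 0 T) := by
    apply hcw
    rw [hwt₀]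
    exact Ioi_mem_nhds hc
  rw [Metric.mem_nhdsWithin_iff] at hev
  obtain ⟨ε, hε, hball⟩ := hev
  set a := max 0 (t₀ - ε / 2) with hadef
  have hat₀ : a < t₀ := max_lt ht₀pos (by linarith)
  have ha0 : 0 ≤ a := le_max_left _ _
  have haIcc : Icc a t₀ ⊆ Icc 0 T := fun t ht => ⟨ha0.trans ht.1, ht.2.trans ht₀Icc.2⟩
  have hshell : ∀ t ∈ Icc a t₀, c₁ ≤ w t := by
    intro t ht
    have hd : dist t t₀ < ε := by
      rw [Real.dist_eq, abs_sub_lt_iff]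
      constructor
      · linarith [ht.2]
      · have : t₀ - ε / 2 ≤ a := le_max_right _ _
        have := this.trans ht.1
        linarith
    exact (hball ⟨hd, haIcc ht⟩).le
  -- fencing: w is nonincreasing on [a, t₀]
  have hfence : ∀ ⦃x⦄, x ∈ Icc a t₀ → w x ≤ w a := by
    refine image_le_of_liminf_slope_right_le_deriv_boundary (B := fun _ => w a) (B' := fun _ => 0)
      (hw.mono haIcc) le_rfl
      continuousOn_const (fun x _ => hasDerivWithinAt_const x _ (w a)) ?_
    intro x hx r hr
    have hx0T : x ∈ Ico 0 T := ⟨ha0.trans hx.1, lt_of_lt_of_le hx.2 ht₀Icc.2⟩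
    have hwxc : w x ≤ c := (hbefore x hx0T.1 hx.2).le
    have hlimsup := hD x hx0T (hshell x ⟨hx.1, hx.2.le⟩) hwxc
    have hfreq : ∃ᶠ h in nhdsWithin 0 (Set.Ioi (0:ℝ)),
        (w (x + h) - w x) / h < r := freq_lt_of_limsup_le hb hr hlimsup
    rw [← map_nhdsGT x, Filter.frequently_map] at *
    refine hfreq.mono fun h hh => ?_
    rw [slope_def_field, add_sub_cancel_left]
    exact hh
  have := hfence (right_mem_Icc.2 hat₀.le)
  rw [hwt₀] at this
  exact absurd (lt_of_le_of_lt this (hbefore a ha0 hat₀)) (lt_irrefl c)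
end

section
/- Let Ω ⊆ ℝ^n be a set, let f : ℝ^n → ℝ^n, G : ℝ^n → ℝ^{n×m}, and h : ℝ^n → ℝ^q be continuous, let γ > 0, and let V : ℝ^n → ℝ be differentiable with V(z) ≥ 0 for all z ∈ Ω and satisfying the Hamilton–Jacobi inequality ∇V(z) · f(z) + (1/(2γ))‖G(z)ᵀ ∇V(z)‖₂² + (1/2)‖h(z)‖₂² ≤ 0 for all z ∈ Ω. Let τ > 0, let u : [0, τ] → ℝ^m be continuous, and let x : [0, τ] → ℝ^n be differentiable with x'(t) = f(x(t)) + G(x(t)) u(t) and x(t) ∈ Ω for all t ∈ [0, τ]. Define y(t) = h(x(t)). Then (∫₀^τ ‖y(t)‖₂² dt)^{1/2} ≤ √γ · (∫₀^τ ‖u(t)‖₂² dt)^{1/2} + √(2 V(x(0))). In particular the L₂ gain of the input–output map u ↦ y along trajectories remaining in Ω is at most √γ. -/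
open scoped RealInnerProductSpace BigOperators

private lemma sqrt_add_le' (a b : ℝ) (ha : 0 ≤ a) (hb : 0 ≤ b) :
    Real.sqrt (a + b) ≤ Real.sqrt a + Real.sqrt b := by
  rw [show a + b = Real.sqrt a ^2 + Real.sqrt b ^2 by rw [Real.sq_sqrt ha, Real.sq_sqrt hb]]
  nlinarith [Real.sqrt_nonneg a, Real.sqrt_nonneg b,
    Real.sqrt_le_sqrt (show Real.sqrt a ^2 + Real.sqrt b ^2 ≤ (Real.sqrt a + Real.sqrt b)^2 by
      nlinarith [Real.sqrt_nonneg a, Real.sqrt_nonneg b]),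
    Real.sqrt_sq (by positivity : (0:ℝ) ≤ Real.sqrt a + Real.sqrt b)]

/-- if a nonnegative differentiable storage function `V` satisfies the
Hamilton–Jacobi inequality on `Ω`, then along any trajectory of `ẋ = f(x) + G(x)u`
remaining in `Ω` the finite-gain `L₂` estimate holds with gain `√γ` and bias
`√(2V(x(0)))`. -/
theorem l2_gain_along_trajectories (n m q : ℕ) (Ω : Set (EuclideanSpace ℝ (Fin n)))
    (f : EuclideanSpace ℝ (Fin n) → EuclideanSpace ℝ (Fin n))
    (G : EuclideanSpace ℝ (Fin n) → Matrix (Fin n) (Fin m) ℝ)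
    (h : EuclideanSpace ℝ (Fin n) → EuclideanSpace ℝ (Fin q))
    (hf : Continuous f) (hG : ∀ i j, Continuous fun z => G z i j) (hh : Continuous h)
    (γ : ℝ) (hγ : 0 < γ)
    (V : EuclideanSpace ℝ (Fin n) → ℝ) (hV : Differentiable ℝ V)
    (hVpos : ∀ z ∈ Ω, 0 ≤ V z)
    (hHJ : ∀ z ∈ Ω,
      ⟪gradient V z, f z⟫
        + (1 / (2 * γ)) *
            (∑ i, ((G z).transpose.mulVec
              ((EuclideanSpace.equiv (Fin n) ℝ) (gradient V z)) i) ^ 2)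
        + (1 / 2) * ‖h z‖ ^ 2 ≤ 0)
    (τ : ℝ) (hτ : 0 < τ)
    (u : ℝ → EuclideanSpace ℝ (Fin m)) (hu : ContinuousOn u (Set.Icc 0 τ))
    (x : ℝ → EuclideanSpace ℝ (Fin n))
    (hx : ∀ t ∈ Set.Icc 0 τ,
      HasDerivAt x
        (f (x t) + (EuclideanSpace.equiv (Fin n) ℝ).symm
          ((G (x t)).mulVec ((EuclideanSpace.equiv (Fin m) ℝ) (u t)))) t)
    (hxΩ : ∀ t ∈ Set.Icc 0 τ, x t ∈ Ω) :
    Real.sqrt (∫ t in (0:ℝ)..τ, ‖h (x t)‖ ^ 2) ≤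
      Real.sqrt γ * Real.sqrt (∫ t in (0:ℝ)..τ, ‖u t‖ ^ 2) +
        Real.sqrt (2 * V (x 0)) := by
  have huIcc : Set.uIcc (0:ℝ) τ = Set.Icc 0 τ := Set.uIcc_of_le hτ.le
  -- continuity of x on Icc
  have hxc : ContinuousOn x (Set.Icc 0 τ) := fun t ht =>
    ((hx t ht).continuousAt).continuousWithinAt
  -- φ
  set φ : ℝ → ℝ := fun t => γ/2 * ‖u t‖^2 - 1/2 * ‖h (x t)‖^2 with hφ
  have hucont : ContinuousOn (fun t => ‖u t‖^2) (Set.Icc 0 τ) := (hu.norm.pow 2)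
  have hycont : ContinuousOn (fun t => ‖h (x t)‖^2) (Set.Icc 0 τ) :=
    (((hh.comp_continuousOn hxc)).norm.pow 2)
  have hφcont : ContinuousOn φ (Set.Icc 0 τ) :=
    (hucont.const_smul (γ/2)).sub (hycont.const_smul (1/2:ℝ))
  have hφint : MeasureTheory.IntegrableOn φ (Set.Icc 0 τ) :=
    hφcont.integrableOn_compact isCompact_Icc
  -- derivative of V ∘ x
  set g : ℝ → ℝ := fun t => V (x t) with hg
  have hgderiv : ∀ t ∈ Set.Icc 0 τ, HasDerivAt g
      (⟪gradient V (x t), f (x t) + (EuclideanSpace.equiv (Fin n) ℝ).symm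
          ((G (x t)).mulVec ((EuclideanSpace.equiv (Fin m) ℝ) (u t)))⟫) t := by
    intro t ht
    have h1 := (hV (x t)).hasGradientAt
    have h2 := h1.hasFDerivAt.comp_hasDerivAt t (hx t ht)
    simpa [hg, Function.comp_def] using h2
  have hgc : ContinuousOn g (Set.Icc 0 τ) := fun t ht =>
    ((hgderiv t ht).continuousAt).continuousWithinAt
  -- pointwise bound: derivative ≤ φ
  have hbd : ∀ t ∈ Set.Icc 0 τ,
      (⟪gradient V (x t), f (x t) + (EuclideanSpace.equiv (Fin n) ℝ).symm
          ((G (x t)).mulVec ((EuclideanSpace.equiv (Fin m) ℝ) (u t)))⟫) ≤ φ t := by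
    intro t ht
    have hzΩ := hxΩ t ht
    set z := x t
    set w : Fin m → ℝ := (G z).transpose.mulVec ((EuclideanSpace.equiv (Fin n) ℝ) (gradient V z)) with hw
    have hsplit : (⟪gradient V z, f z + (EuclideanSpace.equiv (Fin n) ℝ).symm
        ((G z).mulVec ((EuclideanSpace.equiv (Fin m) ℝ) (u t)))⟫)
        = ⟪gradient V z, f z⟫ + ∑ j, w j * (u t) j := by
      rw [inner_add_right]
      congr 1
      have : (⟪gradient V z, (EuclideanSpace.equiv (Fin n) ℝ).symm
          ((G z).mulVec ((EuclideanSpace.equiv (Fin m) ℝ) (u t)))⟫)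
          = dotProduct (fun i => gradient V z i)
              ((G z).mulVec (fun j => u t j)) := by
        simp [PiLp.inner_apply, dotProduct, -inner_gradient_left]
        exact Finset.sum_congr rfl fun i _ => mul_comm _ _
      rw [this, Matrix.dotProduct_mulVec]
      simp only [hw, dotProduct, Matrix.mulVec_transpose]
      rfl
    rw [hsplit]
    have hAM : ∀ j, w j * (u t) j ≤ 1/(2*γ) * (w j)^2 + γ/2 * ((u t) j)^2 := by
      intro j
      have h2γ : (0:ℝ) < 2*γ := by linarith
      rw [show 1/(2*γ) * (w j)^2 + γ/2 * ((u t) j)^2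
          = ((w j)^2 + γ^2*((u t) j)^2)/(2*γ) by field_simp]
      rw [le_div_iff₀ h2γ]
      nlinarith [sq_nonneg (w j - γ * (u t) j)]
    have hsum : ∑ j, w j * (u t) j ≤ 1/(2*γ) * (∑ j, (w j)^2) + γ/2 * (∑ j, ((u t) j)^2) := by
      rw [Finset.mul_sum, Finset.mul_sum, ← Finset.sum_add_distrib]
      exact Finset.sum_le_sum fun j _ => hAM j
    have hunorm : ∑ j, ((u t) j)^2 = ‖u t‖^2 := by
      simp [EuclideanSpace.norm_eq, Real.sq_sqrt,
        Finset.sum_nonneg (fun i _ => sq_nonneg ((u t) i)), sq_abs]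
    have := hHJ z hzΩ
    simp only [φ]
    calc ⟪gradient V z, f z⟫ + ∑ j, w j * (u t) j
        ≤ ⟪gradient V z, f z⟫ + (1/(2*γ) * (∑ j, (w j)^2) + γ/2 * (∑ j, ((u t) j)^2)) := by
          linarith
      _ ≤ γ/2 * ‖u t‖^2 - 1/2 * ‖h z‖^2 := by
          rw [hunorm]
          have h2 : (1 / (2 * γ)) * (∑ j, (w j)^2) = 1/(2*γ) * ∑ j, (w j)^2 := rfl
          linarith [this]
  -- FTC comparison
  have key : g τ - g 0 ≤ ∫ s in (0:ℝ)..τ, φ s := by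
    apply intervalIntegral.sub_le_integral_of_hasDeriv_right_of_le hτ.le hgc
      (g' := fun t => (⟪gradient V (x t), f (x t) + (EuclideanSpace.equiv (Fin n) ℝ).symm
          ((G (x t)).mulVec ((EuclideanSpace.equiv (Fin m) ℝ) (u t)))⟫))
      (fun t ht => ((hgderiv t (Set.Ioo_subset_Icc_self ht)).hasDerivWithinAt)) hφint
      (fun t ht => hbd t (Set.Ioo_subset_Icc_self ht))
  -- rewrite integral of φ
  have hUint : IntervalIntegrable (fun t => ‖u t‖^2) MeasureTheory.volume 0 τ := by
    apply ContinuousOn.intervalIntegrable; rwa [huIcc]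
  have hYint : IntervalIntegrable (fun t => ‖h (x t)‖^2) MeasureTheory.volume 0 τ := by
    apply ContinuousOn.intervalIntegrable; rwa [huIcc]
  have hφsplit : (∫ s in (0:ℝ)..τ, φ s)
      = γ/2 * (∫ t in (0:ℝ)..τ, ‖u t‖^2) - 1/2 * (∫ t in (0:ℝ)..τ, ‖h (x t)‖^2) := by
    simp only [φ]
    rw [intervalIntegral.integral_sub (hUint.const_mul _) (hYint.const_mul _),
      intervalIntegral.integral_const_mul, intervalIntegral.integral_const_mul]
  have hVτ : 0 ≤ g τ := hVpos _ (hxΩ τ ⟨hτ.le, le_refl τ⟩)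
  have hmain : (∫ t in (0:ℝ)..τ, ‖h (x t)‖^2) ≤ γ * (∫ t in (0:ℝ)..τ, ‖u t‖^2) + 2 * V (x 0) := by
    have : g 0 = V (x 0) := rfl
    rw [hφsplit] at key; linarith
  -- integrals nonneg
  have hYnn : 0 ≤ ∫ t in (0:ℝ)..τ, ‖h (x t)‖^2 :=
    intervalIntegral.integral_nonneg hτ.le (fun t _ => sq_nonneg _)
  have hUnn : 0 ≤ ∫ t in (0:ℝ)..τ, ‖u t‖^2 :=
    intervalIntegral.integral_nonneg hτ.le (fun t _ => sq_nonneg _)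
  have hV0 : 0 ≤ 2 * V (x 0) := by
    have := hVpos _ (hxΩ 0 ⟨le_refl 0, hτ.le⟩); linarith
  calc Real.sqrt (∫ t in (0:ℝ)..τ, ‖h (x t)‖ ^ 2)
      ≤ Real.sqrt (γ * (∫ t in (0:ℝ)..τ, ‖u t‖^2) + 2 * V (x 0)) := Real.sqrt_le_sqrt hmain
    _ ≤ Real.sqrt (γ * (∫ t in (0:ℝ)..τ, ‖u t‖^2)) + Real.sqrt (2 * V (x 0)) :=
        sqrt_add_le' _ _ (by positivity) hV0
    _ = Real.sqrt γ * Real.sqrt (∫ t in (0:ℝ)..τ, ‖u t‖ ^ 2) + Real.sqrt (2 * V (x 0)) := by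
        rw [Real.sqrt_mul hγ.le]
end
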